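/- arXiv:2005.02017 — 7 statements merged into one kernel-verified Lean document; each statement's English description precedes it below -/
import Mathlib

section
/- For every (x,y) ∈ V and every g = (g₁,g₂,g₃) ∈ G one has P₀((x,y)·g) = det(g₁)⁻¹·det(g₂)·det(g₃)·g₁⁻¹·P₀(x,y)·g₁, and consequently P((x,y)·g) = (det(g₁)⁻¹·det(g₂)·det(g₃))²·P(x,y); in particular P is a relative invariant of the action. -/
open Matrix

/-- `2 × 2` matrices over `F`. -/
abbrev M2 (F : Type*) := Matrix (Fin 2) (Fin 2) F

/-- The right action of `G = GL₂(F) × GL₂(F) × GL₂(F)` on `V = M₂(F) × M₂(F)`: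
`(x,y)·(g₁,g₂,g₃) := (a·g₁⁻¹xg₂ + c·g₁⁻¹yg₂, b·g₁⁻¹xg₂ + d·g₁⁻¹yg₂)` where
`g₃ = [[a,b],[c,d]]`. -/
noncomputable def act {F : Type*} [Field F] (v : M2 F × M2 F)
    (g : GL (Fin 2) F × GL (Fin 2) F × GL (Fin 2) F) : M2 F × M2 F :=
  ((((g.2.2 : M2 F) 0 0) • (((g.1⁻¹ : GL (Fin 2) F) : M2 F) * v.1 * (g.2.1 : M2 F)) +
      ((g.2.2 : M2 F) 1 0) • (((g.1⁻¹ : GL (Fin 2) F) : M2 F) * v.2 * (g.2.1 : M2 F))),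
   (((g.2.2 : M2 F) 0 1) • (((g.1⁻¹ : GL (Fin 2) F) : M2 F) * v.1 * (g.2.1 : M2 F)) +
      ((g.2.2 : M2 F) 1 1) • (((g.1⁻¹ : GL (Fin 2) F) : M2 F) * v.2 * (g.2.1 : M2 F))))

/-- `P₀(x,y) = x·y^ι − y·x^ι`, where `m^ι` is the adjugate. -/
def P0 {F : Type*} [Field F] (v : M2 F × M2 F) : M2 F :=
  v.1 * v.2.adjugate - v.2 * v.1.adjugate

/-- The fundamental relative invariant `P(x,y) = −det(P₀(x,y))`. -/
def Pinv {F : Type*} [Field F] (v : M2 F × M2 F) : F := - (P0 v).det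

/-- Adjugate of `2 × 2` matrices is linear. -/
theorem adjugate_smul_add_smul {F : Type*} [Field F] (p q : F) (M N : M2 F) :
    (p•M+q•N).adjugate = p • M.adjugate + q • N.adjugate := by
  ext i j
  fin_cases i <;> fin_cases j <;>
    simp [adjugate_fin_two, Matrix.add_apply, Matrix.smul_apply] <;> ring

/-- The key algebraic identity behind the relative invariance of `P₀`. -/
theorem key_identity {F : Type*} [Field F] (A B x y : M2 F) (a b c d : F) :
    (a•(A*x*B)+c•(A*y*B)) * (b•(A*x*B)+d•(A*y*B)).adjugate -
      (b•(A*x*B)+d•(A*y*B)) * (a•(A*x*B)+c•(A*y*B)).adjugate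
    = (B.det * (a*d - b*c)) • (A * (x*y.adjugate - y*x.adjugate) * A.adjugate) := by
  have h : ∀ (w : M2 F), B * (B.adjugate * w) = B.det • w := by
    intro w; rw [← Matrix.mul_assoc, Matrix.mul_adjugate, Matrix.smul_mul, Matrix.one_mul]
  rw [adjugate_smul_add_smul, adjugate_smul_add_smul]
  simp only [adjugate_mul_distrib, Matrix.add_mul, Matrix.mul_add, smul_mul_assoc,
    mul_smul_comm, Matrix.mul_sub, Matrix.sub_mul, smul_sub, Matrix.mul_assoc, h]
  module

/-- `P₀((x,y)·g) = det(g₁)⁻¹ det(g₂) det(g₃) · g₁⁻¹ P₀(x,y) g₁` and consequently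
`P((x,y)·g) = (det(g₁)⁻¹ det(g₂) det(g₃))² · P(x,y)`, i.e. `P` is a relative invariant. -/
theorem stmt0 {F : Type*} [Field F] (v : M2 F × M2 F)
    (g : GL (Fin 2) F × GL (Fin 2) F × GL (Fin 2) F) :
    P0 (act v g) =
      (((g.1 : M2 F).det)⁻¹ * (g.2.1 : M2 F).det * (g.2.2 : M2 F).det) •
        (((g.1⁻¹ : GL (Fin 2) F) : M2 F) * P0 v * (g.1 : M2 F)) ∧
    Pinv (act v g) =
      (((g.1 : M2 F).det)⁻¹ * (g.2.1 : M2 F).det * (g.2.2 : M2 F).det) ^ 2 * Pinv v := by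
  set A : M2 F := ((g.1⁻¹ : GL (Fin 2) F) : M2 F) with hA
  set C : M2 F := (g.1 : M2 F) with hCdef
  set B : M2 F := (g.2.1 : M2 F) with hBdef
  set D : M2 F := (g.2.2 : M2 F) with hDdef
  have hAC : A * C = 1 := g.1.inv_mul
  have hdet : A.det * C.det = 1 := by
    rw [← Matrix.det_mul, hAC, Matrix.det_one]
  have hC : (C.det)⁻¹ = A.det := inv_eq_of_mul_eq_one_right (by rw [mul_comm]; exact hdet)
  have hadjA : A.adjugate = A.det • C := by
    calc A.adjugate = A.adjugate * (A * C) := by rw [hAC, Matrix.mul_one]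
      _ = (A.adjugate * A) * C := by rw [Matrix.mul_assoc]
      _ = A.det • C := by rw [Matrix.adjugate_mul, Matrix.smul_mul, Matrix.one_mul]
  have h1 : P0 (act v g) =
      ((C.det)⁻¹ * B.det * D.det) • (A * P0 v * C) := by
    simp only [P0, act]
    rw [key_identity, hadjA, hC, Matrix.det_fin_two D]
    simp only [Matrix.mul_smul, smul_smul]
    congr 1
    ring
  refine ⟨h1, ?_⟩
  rw [Pinv, Pinv, h1]
  rw [Matrix.det_smul, Matrix.det_mul, Matrix.det_mul, hC]
  simp only [Fintype.card_fin]
  linear_combination (-((A.det * B.det * D.det) ^ 2 * (P0 v).det)) * hdet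
end

section
/- For every (x,y) ∈ V: (i) writing Fⱼ(x,y) = (y₁, y₁₂, y₂), one has y₁₂² − 4·y₁·y₂ = P(x,y) for both j = 1 and j = 2; (ii) for every g = (g₁,g₂,g₃) ∈ G and every (u,v) ∈ F², Q_{F₁((x,y)·g)}(u,v) = det(g₂)·det(g₃)·Q_{F₁(x,y)}((g₁⁻¹)ᵀ·(u,v)) and Q_{F₂((x,y)·g)}(u,v) = det(g₁)⁻¹·det(g₃)·Q_{F₂(x,y)}(g₂·(u,v)), where Q_{(y₁,y₁₂,y₂)}(u,v) := y₁u² + y₁₂uv + y₂v² and matrices act on column vectors. -/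
open Matrix

/-- The equivariant map `F₁ : V → F³`. -/
def Fmap1 {F : Type*} [Field F] (v : M2 F × M2 F) : F × F × F :=
  (v.1 0 0 * v.2 0 1 - v.1 0 1 * v.2 0 0,
   (v.1 0 0 * v.2 1 1 - v.1 0 1 * v.2 1 0) + (v.1 1 0 * v.2 0 1 - v.1 1 1 * v.2 0 0),
   v.1 1 0 * v.2 1 1 - v.1 1 1 * v.2 1 0)

/-- The equivariant map `F₂ : V → F³`. -/
def Fmap2 {F : Type*} [Field F] (v : M2 F × M2 F) : F × F × F :=
  (v.1 0 0 * v.2 1 0 - v.2 0 0 * v.1 1 0,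
   (v.1 0 0 * v.2 1 1 - v.2 0 1 * v.1 1 0) + (v.1 0 1 * v.2 1 0 - v.2 0 0 * v.1 1 1),
   v.1 0 1 * v.2 1 1 - v.2 0 1 * v.1 1 1)

/-- The binary quadratic form attached to a triple `(y₁, y₁₂, y₂)`:
`Q(u,v) = y₁u² + y₁₂uv + y₂v²`. -/
def Qform {F : Type*} [Field F] (t : F × F × F) (u v : F) : F :=
  t.1 * u ^ 2 + t.2.1 * u * v + t.2.2 * v ^ 2

/-- (i) the discriminants of `F₁(x,y)` and `F₂(x,y)` both equal `P(x,y)`;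
(ii) the quadratic forms attached to `F₁` and `F₂` transform equivariantly under `G`. -/
theorem stmt1 {F : Type*} [Field F] (v : M2 F × M2 F) :
    ((Fmap1 v).2.1 ^ 2 - 4 * (Fmap1 v).1 * (Fmap1 v).2.2 = Pinv v ∧
     (Fmap2 v).2.1 ^ 2 - 4 * (Fmap2 v).1 * (Fmap2 v).2.2 = Pinv v) ∧
    (∀ (g : GL (Fin 2) F × GL (Fin 2) F × GL (Fin 2) F) (u w : F),
      Qform (Fmap1 (act v g)) u w =
        (g.2.1 : M2 F).det * (g.2.2 : M2 F).det *
          Qform (Fmap1 v)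
            ((((g.1⁻¹ : GL (Fin 2) F) : M2 F)ᵀ).mulVec ![u, w] 0)
            ((((g.1⁻¹ : GL (Fin 2) F) : M2 F)ᵀ).mulVec ![u, w] 1) ∧
      Qform (Fmap2 (act v g)) u w =
        ((g.1 : M2 F).det)⁻¹ * (g.2.2 : M2 F).det *
          Qform (Fmap2 v)
            ((g.2.1 : M2 F).mulVec ![u, w] 0)
            ((g.2.1 : M2 F).mulVec ![u, w] 1)) := by
  refine ⟨⟨?_, ?_⟩, ?_⟩
  · simp only [Fmap1, Pinv, P0, Matrix.det_fin_two, Matrix.adjugate_fin_two,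
      Matrix.sub_apply, Matrix.mul_apply, Fin.sum_univ_two, Matrix.of_apply, Matrix.cons_val',
      Matrix.cons_val_zero, Matrix.cons_val_one, Matrix.head_cons, Matrix.empty_val',
      Matrix.cons_val_fin_one, Matrix.head_fin_const]
    ring
  · simp only [Fmap2, Pinv, P0, Matrix.det_fin_two, Matrix.adjugate_fin_two,
      Matrix.sub_apply, Matrix.mul_apply, Fin.sum_univ_two, Matrix.of_apply, Matrix.cons_val',
      Matrix.cons_val_zero, Matrix.cons_val_one, Matrix.head_cons, Matrix.empty_val',
      Matrix.cons_val_fin_one, Matrix.head_fin_const]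
    ring
  · intro g u w
    have ha : ((g.1⁻¹ : GL (Fin 2) F) : M2 F) * (g.1 : M2 F) = 1 := by
      exact_mod_cast g.1.inv_mul
    have hdet : ((g.1 : M2 F).det)⁻¹ = ((g.1⁻¹ : GL (Fin 2) F) : M2 F).det := by
      have h2 := congrArg Matrix.det ha
      rw [Matrix.det_mul, Matrix.det_one] at h2
      exact (eq_inv_of_mul_eq_one_left h2).symm
    rw [hdet]
    constructor <;>
    · simp only [act, Fmap1, Fmap2, Qform, Matrix.mulVec, dotProduct, Fin.sum_univ_two,
        Matrix.add_apply, Matrix.smul_apply, Matrix.mul_apply, smul_eq_mul, Matrix.det_fin_two,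
        Matrix.transpose_apply, Matrix.cons_val_zero, Matrix.cons_val_one, Matrix.head_cons]
      ring
end

section
/- Assume char F ≠ 2. The singular set {(x,y) ∈ V : P(x,y) = 0} is the union of the G-orbits of the six elements x₀ := (0,0), x₁ := (0,E₁₂), x₂ := (0,I₂), x₃ := (E₁₁,E₁₂), x₄ := (E₁₂,E₂₂), x₅ := (E₁₂,I₂), and these six orbits are pairwise disjoint (here Eᵢⱼ denotes the 2×2 matrix unit and I₂ the identity matrix). -/
open Matrix

/-- The `G`-orbit of a point of `V`. -/
noncomputable def orbit {F : Type*} [Field F] (v : M2 F × M2 F) : Set (M2 F × M2 F) :=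
  {w | ∃ g : GL (Fin 2) F × GL (Fin 2) F × GL (Fin 2) F, act v g = w}

/-- The six representatives `x₀,…,x₅` of the singular orbits. -/
noncomputable def singRep {F : Type*} [Field F] : Fin 6 → M2 F × M2 F :=
  ![(0, 0),
    (0, !![0, 1; 0, 0]),
    (0, 1),
    (!![1, 0; 0, 0], !![0, 1; 0, 0]),
    (!![0, 1; 0, 0], !![0, 0; 0, 1]),
    (!![0, 1; 0, 0], 1)]

section Aux

variable {F : Type*} [Field F]

/-! ### Group elements from matrices -/

/-- build a GL element from a matrix with nonzero det -/
noncomputable def glD (A : M2 F) (h : A.det ≠ 0) : GL (Fin 2) F :=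
  ⟨A, (A.det)⁻¹ • A.adjugate,
    by rw [mul_smul_comm, Matrix.mul_adjugate, smul_smul, inv_mul_cancel₀ h, one_smul],
    by rw [smul_mul_assoc, Matrix.adjugate_mul, smul_smul, inv_mul_cancel₀ h, one_smul]⟩

@[simp] lemma glD_coe (A : M2 F) (h : A.det ≠ 0) : ((glD A h : GL (Fin 2) F) : M2 F) = A := rfl

@[simp] lemma glD_inv_mul (A : M2 F) (h : A.det ≠ 0) :
    (((glD A h)⁻¹ : GL (Fin 2) F) : M2 F) * A = 1 := (glD A h).inv_mul

@[simp] lemma glD_mul_inv (A : M2 F) (h : A.det ≠ 0) :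
    A * (((glD A h)⁻¹ : GL (Fin 2) F) : M2 F) = 1 := (glD A h).mul_inv

lemma gl_det_ne_zero (g : GL (Fin 2) F) : ((g : M2 F)).det ≠ 0 := by
  intro h
  have h1 : ((g : M2 F) * ((g⁻¹ : GL (Fin 2) F) : M2 F)).det = 1 := by
    rw [g.mul_inv]; simp
  rw [Matrix.det_mul, h, zero_mul] at h1
  exact zero_ne_one h1

/-! ### The action -/

lemma act_one (v : M2 F × M2 F) : act v 1 = v := by
  simp [act, Matrix.one_apply]

lemma act_mul (v : M2 F × M2 F) (g h : GL (Fin 2) F × GL (Fin 2) F × GL (Fin 2) F) :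
    act (act v g) h = act v (g * h) := by
  obtain ⟨x, y⟩ := v
  obtain ⟨g1, g2, g3⟩ := g
  obtain ⟨h1, h2, h3⟩ := h
  simp only [act, Prod.mk_mul_mk, _root_.mul_inv_rev, Units.val_mul, Matrix.mul_apply,
    Fin.sum_univ_two]
  refine Prod.ext ?_ ?_ <;>
  · show _ = _
    simp only [Matrix.mul_add, Matrix.add_mul, Matrix.mul_smul, Matrix.smul_mul, mul_assoc]
    module

lemma mem_orbit_iff {v w : M2 F × M2 F} :
    w ∈ orbit v ↔ ∃ g, act v g = w := Iff.rfl

lemma orbit_refl (v : M2 F × M2 F) : v ∈ orbit v := ⟨1, act_one v⟩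

lemma orbit_symm {v w : M2 F × M2 F} (h : w ∈ orbit v) : v ∈ orbit w := by
  obtain ⟨g, hg⟩ := h
  exact ⟨g⁻¹, by rw [← hg, act_mul, mul_inv_cancel, act_one]⟩

lemma orbit_trans {u v w : M2 F × M2 F} (h1 : v ∈ orbit u) (h2 : w ∈ orbit v) :
    w ∈ orbit u := by
  obtain ⟨g, hg⟩ := h1
  obtain ⟨g', hg'⟩ := h2
  exact ⟨g * g', by rw [← act_mul, hg, hg']⟩

/-- move by `(u, w, 1)` -/
lemma act_gl (v : M2 F × M2 F) (u w : GL (Fin 2) F) :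
    act v (u, w, 1) = (((u⁻¹ : GL (Fin 2) F) : M2 F) * v.1 * (w : M2 F),
      ((u⁻¹ : GL (Fin 2) F) : M2 F) * v.2 * (w : M2 F)) := by
  simp [act, Matrix.one_apply]

/-- move by `(1, 1, γ)` -/
lemma act_pencil (v : M2 F × M2 F) (γ : GL (Fin 2) F) :
    act v (1, 1, γ) = (((γ : M2 F) 0 0) • v.1 + ((γ : M2 F) 1 0) • v.2,
      ((γ : M2 F) 0 1) • v.1 + ((γ : M2 F) 1 1) • v.2) := by
  simp [act]

/-! ### Pinv computations -/

lemma PinvEq (v : M2 F × M2 F) :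
    Pinv v = (trace (v.1 * adjugate v.2))^2 - 4 * v.1.det * v.2.det := by
  obtain ⟨x, y⟩ := v
  show -((x * adjugate y - y * adjugate x).det) = _
  rw [Matrix.adjugate_fin_two, Matrix.adjugate_fin_two]
  simp [Matrix.det_fin_two, Matrix.trace_fin_two, Matrix.mul_apply, Fin.sum_univ_two]
  ring

lemma adj_smul_add (a c : F) (x y : M2 F) :
    adjugate (a•x + c•y) = a • adjugate x + c • adjugate y := by
  ext i j
  rw [Matrix.adjugate_fin_two, Matrix.adjugate_fin_two, Matrix.adjugate_fin_two]
  fin_cases i <;> fin_cases j <;> simp <;> ring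

lemma Pinv_smul_pair (a b c d : F) (x y : M2 F) :
    Pinv (a•x + c•y, b•x + d•y) = (a*d - b*c)^2 * Pinv (x,y) := by
  show -(((a•x + c•y) * adjugate (b•x + d•y) - (b•x + d•y) * adjugate (a•x + c•y)).det)
      = (a*d - b*c)^2 * (-((x * adjugate y - y * adjugate x).det))
  have key : (a•x + c•y) * adjugate (b•x + d•y) - (b•x + d•y) * adjugate (a•x + c•y)
      = (a*d - b*c) • (x * adjugate y - y * adjugate x) := by
    rw [adj_smul_add, adj_smul_add]
    simp only [Matrix.mul_add, Matrix.add_mul, Matrix.mul_smul, Matrix.smul_mul]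
    module
  rw [key, Matrix.det_smul]
  simp [Fintype.card_fin]
  try ring

lemma Pinv_conj (u w x y : M2 F) :
    Pinv (u*x*w, u*y*w) = (u.det * w.det)^2 * Pinv (x, y) := by
  show -(((u*x*w) * adjugate (u*y*w) - (u*y*w) * adjugate (u*x*w)).det)
      = (u.det * w.det)^2 * (-((x * adjugate y - y * adjugate x).det))
  have h : ∀ m n : M2 F, (u*m*w) * adjugate (u*n*w) = w.det • (u * (m * adjugate n) * adjugate u) := by
    intro m n
    rw [Matrix.adjugate_mul_distrib, Matrix.adjugate_mul_distrib]
    calc u*m*w * (adjugate w * (adjugate n * adjugate u))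
        = u*m*(w * adjugate w) * (adjugate n * adjugate u) := by noncomm_ring
      _ = u*m*(w.det • (1:M2 F)) * (adjugate n * adjugate u) := by rw [Matrix.mul_adjugate]
      _ = w.det • (u * (m * adjugate n) * adjugate u) := by
          simp only [Matrix.mul_smul, Matrix.smul_mul, Matrix.mul_one]
          noncomm_ring
  rw [h, h, ← smul_sub, ← Matrix.sub_mul, ← Matrix.mul_sub, Matrix.det_smul,
    Matrix.det_mul, Matrix.det_mul, Matrix.det_adjugate]
  simp [Fintype.card_fin]
  ring

lemma Pinv_act (v : M2 F × M2 F) (g : GL (Fin 2) F × GL (Fin 2) F × GL (Fin 2) F) :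
    Pinv (act v g) =
      (((g.2.2 : M2 F)).det)^2 *
        (((((g.1⁻¹ : GL (Fin 2) F) : M2 F)).det * ((g.2.1 : M2 F)).det)^2 * Pinv v) := by
  obtain ⟨x, y⟩ := v
  have h1 : act (x, y) g =
      (((g.2.2 : M2 F) 0 0) • (((g.1⁻¹ : GL (Fin 2) F) : M2 F) * x * (g.2.1 : M2 F)) +
        ((g.2.2 : M2 F) 1 0) • (((g.1⁻¹ : GL (Fin 2) F) : M2 F) * y * (g.2.1 : M2 F)),
       ((g.2.2 : M2 F) 0 1) • (((g.1⁻¹ : GL (Fin 2) F) : M2 F) * x * (g.2.1 : M2 F)) +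
        ((g.2.2 : M2 F) 1 1) • (((g.1⁻¹ : GL (Fin 2) F) : M2 F) * y * (g.2.1 : M2 F))) := rfl
  rw [h1, Pinv_smul_pair, Pinv_conj]
  rw [Matrix.det_fin_two ((g.2.2 : M2 F))]
  try ring

lemma Pinv_act_zero_iff (v : M2 F × M2 F) (g : GL (Fin 2) F × GL (Fin 2) F × GL (Fin 2) F) :
    Pinv (act v g) = 0 ↔ Pinv v = 0 := by
  rw [Pinv_act]
  have h1 := gl_det_ne_zero g.2.2
  have h2 := gl_det_ne_zero g.1⁻¹
  have h3 := gl_det_ne_zero g.2.1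
  constructor
  · intro h
    rcases mul_eq_zero.mp h with h | h
    · exact absurd h (pow_ne_zero _ h1)
    rcases mul_eq_zero.mp h with h | h
    · exact absurd h (pow_ne_zero _ (mul_ne_zero h2 h3))
    · exact h
  · intro h; rw [h]; ring

lemma Pinv_orbit_zero {v w : M2 F × M2 F} (h : w ∈ orbit v) (hv : Pinv v = 0) :
    Pinv w = 0 := by
  obtain ⟨g, hg⟩ := h
  rw [← hg, Pinv_act_zero_iff]
  exact hv

end Aux

section Invariants


variable {F : Type*} [Field F]

/-- linear dependence of the pair -/
def Dv (v : M2 F × M2 F) : Prop := ∃ a b : F, (a ≠ 0 ∨ b ≠ 0) ∧ a • v.1 + b • v.2 = 0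

/-- the determinant vanishes identically on the pencil -/
def Qv (v : M2 F × M2 F) : Prop := ∀ a b : F, (a • v.1 + b • v.2).det = 0

/-- common left kernel (common column line) -/
def Cv (v : M2 F × M2 F) : Prop := ∃ φ : Fin 2 → F, φ ≠ 0 ∧ φ ᵥ* v.1 = 0 ∧ φ ᵥ* v.2 = 0

lemma vecMul_smulM (φ : Fin 2 → F) (c : F) (A : M2 F) : φ ᵥ* (c • A) = c • (φ ᵥ* A) := by
  ext i
  simp [Matrix.vecMul, dotProduct, Fin.sum_univ_two]
  ring

lemma act_combo (v : M2 F × M2 F) (g : GL (Fin 2) F × GL (Fin 2) F × GL (Fin 2) F) (a b : F) :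
    a • (act v g).1 + b • (act v g).2 =
      ((g.1⁻¹ : GL (Fin 2) F) : M2 F) *
        ((a * (g.2.2 : M2 F) 0 0 + b * (g.2.2 : M2 F) 0 1) • v.1 +
          (a * (g.2.2 : M2 F) 1 0 + b * (g.2.2 : M2 F) 1 1) • v.2) * (g.2.1 : M2 F) := by
  show a • (_ + _) + b • (_ + _) = _
  simp only [Matrix.mul_add, Matrix.add_mul, Matrix.mul_smul, Matrix.smul_mul]
  module

lemma orbit_iff_inv {I : M2 F × M2 F → Prop} (H : ∀ v g, I v → I (act v g))
    {v w : M2 F × M2 F} (h : w ∈ orbit v) : I w ↔ I v := by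
  obtain ⟨g, hg⟩ := h
  constructor
  · intro hw
    have := H w g⁻¹ hw
    rwa [← hg, act_mul, mul_inv_cancel, act_one] at this
  · intro hv
    rw [← hg]; exact H v g hv

lemma Zv_act (v : M2 F × M2 F) (g : GL (Fin 2) F × GL (Fin 2) F × GL (Fin 2) F)
    (h : v = 0) : act v g = 0 := by
  subst h
  show (_ • ((_ : M2 F) * (0 : M2 F) * _) + _ • ((_ : M2 F) * (0 : M2 F) * _), _) = _
  simp

lemma Dv_act (v : M2 F × M2 F) (g : GL (Fin 2) F × GL (Fin 2) F × GL (Fin 2) F)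
    (h : Dv v) : Dv (act v g) := by
  obtain ⟨a, b, hab, h0⟩ := h
  set G := (g.2.2 : M2 F) with hG
  have hΔ : G.det ≠ 0 := gl_det_ne_zero g.2.2
  have hdet : G.det = G 0 0 * G 1 1 - G 0 1 * G 1 0 := Matrix.det_fin_two G
  set a' := (G 1 1 * a - G 0 1 * b) / G.det with ha'
  set b' := (G 0 0 * b - G 1 0 * a) / G.det with hb'
  have key1 : a' * G 0 0 + b' * G 0 1 = a := by
    rw [ha', hb']; field_simp; rw [hdet]; ring
  have key2 : a' * G 1 0 + b' * G 1 1 = b := by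
    rw [ha', hb']; field_simp; rw [hdet]; ring
  refine ⟨a', b', ?_, ?_⟩
  · by_contra hc
    push_neg at hc
    obtain ⟨ha0, hb0⟩ := hc
    rw [ha0, hb0] at key1 key2
    simp at key1 key2
    rcases hab with h | h <;> [exact h key1.symm; exact h key2.symm]
  · rw [act_combo, key1, key2, h0, Matrix.mul_zero, Matrix.zero_mul]

lemma Qv_act (v : M2 F × M2 F) (g : GL (Fin 2) F × GL (Fin 2) F × GL (Fin 2) F)
    (h : Qv v) : Qv (act v g) := by
  intro a b
  rw [act_combo, Matrix.det_mul, Matrix.det_mul, h, mul_zero, zero_mul]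

lemma Cv_act (v : M2 F × M2 F) (g : GL (Fin 2) F × GL (Fin 2) F × GL (Fin 2) F)
    (h : Cv v) : Cv (act v g) := by
  obtain ⟨φ, hφ, h1, h2⟩ := h
  refine ⟨φ ᵥ* ((g.1 : GL (Fin 2) F) : M2 F), ?_, ?_, ?_⟩
  · intro hc
    apply hφ
    have : (φ ᵥ* ((g.1 : GL (Fin 2) F) : M2 F)) ᵥ* ((g.1⁻¹ : GL (Fin 2) F) : M2 F) = 0 := by
      rw [hc, Matrix.zero_vecMul]
    rwa [Matrix.vecMul_vecMul, g.1.mul_inv, Matrix.vecMul_one] at this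
  all_goals {
    have key : ∀ (x : M2 F), φ ᵥ* x = 0 → (φ ᵥ* ((g.1 : GL (Fin 2) F) : M2 F)) ᵥ*
        (((g.1⁻¹ : GL (Fin 2) F) : M2 F) * x * (g.2.1 : M2 F)) = 0 := by
      intro x hx
      rw [Matrix.vecMul_vecMul,
        show ((g.1 : GL (Fin 2) F) : M2 F) * (((g.1⁻¹ : GL (Fin 2) F) : M2 F) * x * (g.2.1 : M2 F))
          = x * (g.2.1 : M2 F) by rw [← mul_assoc, ← mul_assoc, g.1.mul_inv, one_mul],
        ← Matrix.vecMul_vecMul, hx, Matrix.zero_vecMul]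
    show _ ᵥ* (_ • (_ * _ * _) + _ • (_ * _ * _)) = 0
    rw [Matrix.vecMul_add, vecMul_smulM, vecMul_smulM, key _ h1, key _ h2, smul_zero,
      smul_zero, add_zero] }

end Invariants

section Toolbox

variable {F : Type*} [Field F]

/-- cross product of two vectors in `F²` -/
def cross (p r : Fin 2 → F) : F := p 0 * r 1 - p 1 * r 0

lemma vec_ne_zero_iff (p : Fin 2 → F) : p ≠ 0 ↔ p 0 ≠ 0 ∨ p 1 ≠ 0 := by
  constructor
  · intro hp
    by_contra hc
    push_neg at hc
    exact hp (funext fun i => by fin_cases i <;> simp [hc.1, hc.2])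
  · rintro (h | h) hc <;> rw [hc] at h <;> simp at h

lemma cross_eq_zero_imp {p r : Fin 2 → F} (hp : p ≠ 0) (h : cross p r = 0) :
    ∃ c : F, r = c • p := by
  unfold cross at h
  rcases (vec_ne_zero_iff p).mp hp with h0 | h1
  · refine ⟨r 0 / p 0, funext fun i => ?_⟩
    fin_cases i <;> simp only [Pi.smul_apply, smul_eq_mul]
    · show r 0 = r 0 / p 0 * p 0
      rw [div_mul_cancel₀ _ h0]
    · show r 1 = r 0 / p 0 * p 1
      rw [div_mul_eq_mul_div, eq_div_iff h0]
      linear_combination h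
  · refine ⟨r 1 / p 1, funext fun i => ?_⟩
    fin_cases i <;> simp only [Pi.smul_apply, smul_eq_mul]
    · show r 0 = r 1 / p 1 * p 0
      rw [div_mul_eq_mul_div, eq_div_iff h1]
      linear_combination -h
    · show r 1 = r 1 / p 1 * p 1
      rw [div_mul_cancel₀ _ h1]

lemma exists_compl (p : Fin 2 → F) (hp : p ≠ 0) : ∃ r, cross p r ≠ 0 := by
  rcases (vec_ne_zero_iff p).mp hp with h | h
  · exact ⟨![0, 1], by simpa [cross] using h⟩
  · exact ⟨![1, 0], by simpa [cross] using h⟩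

/-- matrix with prescribed columns -/
def colMat (p r : Fin 2 → F) : M2 F := !![p 0, r 0; p 1, r 1]

/-- matrix with prescribed rows -/
def rowMat (q s : Fin 2 → F) : M2 F := !![q 0, q 1; s 0, s 1]

@[simp] lemma colMat_det (p r : Fin 2 → F) : (colMat p r).det = cross p r := by
  simp [colMat, cross, Matrix.det_fin_two_of]
  ring

@[simp] lemma rowMat_det (q s : Fin 2 → F) : (rowMat q s).det = cross q s := by
  simp [rowMat, cross, Matrix.det_fin_two_of]

lemma colMat_mulVec_e0 (p r : Fin 2 → F) : colMat p r *ᵥ ![1, 0] = p := by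
  funext i
  fin_cases i <;> simp [colMat, Matrix.mulVec, dotProduct, Fin.sum_univ_two] <;> try ring

lemma colMat_mulVec_e1 (p r : Fin 2 → F) : colMat p r *ᵥ ![0, 1] = r := by
  funext i
  fin_cases i <;> simp [colMat, Matrix.mulVec, dotProduct, Fin.sum_univ_two] <;> try ring <;> try ring

lemma rowMat_vecMul_e0 (q s : Fin 2 → F) : ![(1:F), 0] ᵥ* rowMat q s = q := by
  funext i
  fin_cases i <;> simp [rowMat, Matrix.vecMul, dotProduct, Fin.sum_univ_two] <;> try ring

lemma rowMat_vecMul_e1 (q s : Fin 2 → F) : ![(0:F), 1] ᵥ* rowMat q s = s := by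
  funext i
  fin_cases i <;> simp [rowMat, Matrix.vecMul, dotProduct, Fin.sum_univ_two] <;> try ring

lemma mul_vecMulVec_mul (A B : M2 F) (p q : Fin 2 → F) :
    A * vecMulVec p q * B = vecMulVec (A *ᵥ p) (q ᵥ* B) := by
  ext i j
  simp [Matrix.mul_apply, Matrix.vecMulVec_apply, Matrix.mulVec, Matrix.vecMul,
    dotProduct, Fin.sum_univ_two]
  fin_cases i <;> simp only [Fin.zero_eta, Fin.mk_one, Matrix.cons_val_zero, Matrix.cons_val_one, Matrix.head_cons] <;> ring

lemma E12_eq : (!![0, 1; 0, 0] : M2 F) = vecMulVec ![1, 0] ![0, 1] := by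
  ext i j; fin_cases i <;> fin_cases j <;> simp [Matrix.vecMulVec_apply]

lemma E11_eq : (!![1, 0; 0, 0] : M2 F) = vecMulVec ![1, 0] ![1, 0] := by
  ext i j; fin_cases i <;> fin_cases j <;> simp [Matrix.vecMulVec_apply]

lemma E22_eq : (!![0, 0; 0, 1] : M2 F) = vecMulVec ![0, 1] ![0, 1] := by
  ext i j; fin_cases i <;> fin_cases j <;> simp [Matrix.vecMulVec_apply]

lemma vecMulVec_ne_zero {p q : Fin 2 → F} (hp : p ≠ 0) (hq : q ≠ 0) :
    vecMulVec p q ≠ 0 := by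
  intro hc
  rcases (vec_ne_zero_iff p).mp hp with h | h <;>
    rcases (vec_ne_zero_iff q).mp hq with h' | h'
  · exact mul_ne_zero h h' (by simpa [Matrix.vecMulVec_apply] using congrFun (congrFun hc 0) 0)
  · exact mul_ne_zero h h' (by simpa [Matrix.vecMulVec_apply] using congrFun (congrFun hc 0) 1)
  · exact mul_ne_zero h h' (by simpa [Matrix.vecMulVec_apply] using congrFun (congrFun hc 1) 0)
  · exact mul_ne_zero h h' (by simpa [Matrix.vecMulVec_apply] using congrFun (congrFun hc 1) 1)

lemma vecMulVec_smul_move (c : F) (p q : Fin 2 → F) :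
    vecMulVec p (c • q) = vecMulVec (c • p) q := by
  ext i j; simp [Matrix.vecMulVec_apply]; ring

lemma rank1_decomp {m : M2 F} (hm : m ≠ 0) (hd : m.det = 0) :
    ∃ p q : Fin 2 → F, p ≠ 0 ∧ q ≠ 0 ∧ m = vecMulVec p q := by
  rw [Matrix.det_fin_two] at hd
  have hne : m 0 0 ≠ 0 ∨ m 0 1 ≠ 0 ∨ m 1 0 ≠ 0 ∨ m 1 1 ≠ 0 := by
    by_contra hc
    push_neg at hc
    exact hm (by ext i j; fin_cases i <;> fin_cases j <;>
      simp [hc.1, hc.2.1, hc.2.2.1, hc.2.2.2])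
  by_cases h00 : m 0 0 ≠ 0
  · refine ⟨![m 0 0, m 1 0], ![1, m 0 1 / m 0 0], ?_, ?_, ?_⟩
    · rw [vec_ne_zero_iff]; left; simpa using h00
    · rw [vec_ne_zero_iff]; left; norm_num
    · ext i j
      fin_cases i <;> fin_cases j <;> simp [Matrix.vecMulVec_apply] <;> field_simp <;>
        linear_combination hd
  by_cases h01 : m 0 1 ≠ 0
  · push_neg at h00
    have hc : m 1 0 = 0 := by
      by_contra h10
      apply h10
      have : m 0 1 * m 1 0 = 0 := by linear_combination -hd + m 1 1 * h00
      rcases mul_eq_zero.mp this with h | h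
      · exact absurd h h01
      · exact h
    refine ⟨![m 0 1, m 1 1], ![0, 1], ?_, ?_, ?_⟩
    · rw [vec_ne_zero_iff]; left; simpa using h01
    · rw [vec_ne_zero_iff]; right; norm_num
    · ext i j
      fin_cases i <;> fin_cases j <;> simp [Matrix.vecMulVec_apply, h00, hc]
  by_cases h10 : m 1 0 ≠ 0
  · push_neg at h00 h01
    refine ⟨![0, 1], ![m 1 0, m 1 1], ?_, ?_, ?_⟩
    · rw [vec_ne_zero_iff]; right; norm_num
    · rw [vec_ne_zero_iff]; left; simpa using h10
    · ext i j
      fin_cases i <;> fin_cases j <;> simp [Matrix.vecMulVec_apply, h00, h01]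
  · push_neg at h00 h01 h10
    have h11 : m 1 1 ≠ 0 := by tauto
    refine ⟨![0, 1], ![0, m 1 1], ?_, ?_, ?_⟩
    · rw [vec_ne_zero_iff]; right; norm_num
    · rw [vec_ne_zero_iff]; right; simpa using h11
    · ext i j
      fin_cases i <;> fin_cases j <;> simp [Matrix.vecMulVec_apply, h00, h01, h10]

lemma solve2 {c d : F} (h : c ≠ 0 ∨ d ≠ 0) :
    ∃ γ : M2 F, γ.det ≠ 0 ∧ γ 0 0 * c + γ 1 0 * d = 0 ∧ γ 0 1 * c + γ 1 1 * d = 1 := by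
  by_cases hc : c ≠ 0
  · refine ⟨!![d, 1/c; -c, 0], ?_, ?_, ?_⟩
    · rw [Matrix.det_fin_two_of]; field_simp; simp
    · simp; ring
    · simp; field_simp
  · push_neg at hc
    have hd : d ≠ 0 := by tauto
    refine ⟨!![1, 0; 0, 1/d], ?_, ?_, ?_⟩
    · rw [Matrix.det_fin_two_of]; field_simp; simp [hd]
    · simp [hc]
    · simp [hc]; field_simp

lemma det_add_fin2 (x y : M2 F) :
    (x + y).det = x.det + trace (x * adjugate y) + y.det := by
  rw [Matrix.adjugate_fin_two]
  simp [Matrix.det_fin_two, Matrix.trace_fin_two, Matrix.mul_apply, Fin.sum_univ_two]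
  ring

lemma trace_rank1 (p q r s : Fin 2 → F) :
    trace (vecMulVec p q * adjugate (vecMulVec r s)) = cross p r * cross q s := by
  rw [Matrix.adjugate_fin_two]
  simp [Matrix.trace_fin_two, Matrix.mul_apply, Fin.sum_univ_two, Matrix.vecMulVec_apply, cross]
  ring

lemma sq_zero_of (n : M2 F) (h1 : trace n = 0) (h2 : n.det = 0) : n * n = 0 := by
  rw [Matrix.trace_fin_two] at h1
  rw [Matrix.det_fin_two] at h2
  ext i j
  fin_cases i <;> fin_cases j <;> simp [Matrix.mul_apply, Fin.sum_univ_two]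
  · linear_combination n 0 0 * h1 - h2
  · linear_combination n 0 1 * h1
  · linear_combination n 1 0 * h1
  · linear_combination n 1 1 * h1 - h2
end Toolbox

section Classify
variable {F : Type*} [Field F]

lemma singRep0 : (singRep 0 : M2 F × M2 F) = (0, 0) := rfl
lemma singRep1 : (singRep 1 : M2 F × M2 F) = (0, !![0,1;0,0]) := rfl
lemma singRep2 : (singRep 2 : M2 F × M2 F) = (0, 1) := rfl
lemma singRep3 : (singRep 3 : M2 F × M2 F) = (!![1,0;0,0], !![0,1;0,0]) := rfl
lemma singRep4 : (singRep 4 : M2 F × M2 F) = (!![0,1;0,0], !![0,0;0,1]) := rfl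
lemma singRep5 : (singRep 5 : M2 F × M2 F) = (!![0,1;0,0], 1) := rfl

lemma assoc5 (A U E W B : M2 F) : A * (U * E * W) * B = (A * U) * E * (W * B) := by
  noncomm_ring

lemma conj_orbit {x y x' y' : M2 F} (U W : M2 F) (hU : U.det ≠ 0) (hW : W.det ≠ 0)
    (hx : U * x' * W = x) (hy : U * y' * W = y) : (x', y') ∈ orbit (x, y) := by
  refine ⟨(glD U hU, (glD W hW)⁻¹, 1), ?_⟩
  rw [act_gl]
  show (((glD U hU)⁻¹ : GL (Fin 2) F).1 * x * ((glD W hW)⁻¹ : GL (Fin 2) F).1,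
    ((glD U hU)⁻¹ : GL (Fin 2) F).1 * y * ((glD W hW)⁻¹ : GL (Fin 2) F).1) = _
  rw [← hx, ← hy, assoc5, assoc5]
  rw [show ((glD U hU)⁻¹ : GL (Fin 2) F).1 * U = 1 from (glD U hU).inv_mul,
    show W * ((glD W hW)⁻¹ : GL (Fin 2) F).1 = 1 from (glD W hW).mul_inv,
    one_mul, one_mul, mul_one, mul_one]

lemma pencil_orbit {x y : M2 F} (γ : M2 F) (hγ : γ.det ≠ 0) :
    (γ 0 0 • x + γ 1 0 • y, γ 0 1 • x + γ 1 1 • y) ∈ orbit (x, y) :=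
  ⟨(1, 1, glD γ hγ), by rw [act_pencil]; rfl⟩

/-- normal form for a rank ≤ 1 nonzero matrix -/
lemma rank1_orbit {m : M2 F} (hm : m ≠ 0) (hd : m.det = 0) :
    (singRep 1 : M2 F × M2 F) ∈ orbit ((0 : M2 F), m) := by
  obtain ⟨p, q, hp, hq, hpq⟩ := rank1_decomp hm hd
  obtain ⟨r, hr⟩ := exists_compl p hp
  obtain ⟨s, hs⟩ := exists_compl q hq
  have hU : (colMat p r).det ≠ 0 := by rwa [colMat_det]
  have hW : (rowMat s q).det ≠ 0 := by
    rw [rowMat_det]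
    intro hc
    apply hs
    unfold cross at hc ⊢
    linear_combination -hc
  rw [singRep1]
  refine conj_orbit _ _ hU hW ?_ ?_
  · rw [Matrix.mul_zero, Matrix.zero_mul]
  · rw [E12_eq, mul_vecMulVec_mul, colMat_mulVec_e0, rowMat_vecMul_e1, hpq]

/-- scalar pencil case -/
lemma scalar_case {m : M2 F} (c d : F) (hcd : c ≠ 0 ∨ d ≠ 0) (hm : m ≠ 0) :
    ∃ i : Fin 6, singRep (F := F) i ∈ orbit (c • m, d • m) := by
  obtain ⟨γ, hγ, e0, e1⟩ := solve2 hcd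
  have step1 : ((0 : M2 F), m) ∈ orbit (c • m, d • m) := by
    have := pencil_orbit (x := c • m) (y := d • m) γ hγ
    rw [smul_smul, smul_smul, smul_smul, smul_smul, ← add_smul, ← add_smul, e0, e1,
      zero_smul, one_smul] at this
    exact this
  by_cases hdm : m.det = 0
  · exact ⟨1, orbit_trans step1 (rank1_orbit hm hdm)⟩
  · refine ⟨2, orbit_trans step1 ?_⟩
    rw [singRep2]
    refine conj_orbit 1 m (by simp) hdm ?_ ?_
    · rw [Matrix.mul_zero, Matrix.zero_mul]
    · rw [one_mul, one_mul]

lemma classify_dep (v : M2 F × M2 F) (hD : Dv v) : ∃ i : Fin 6, singRep (F := F) i ∈ orbit v := by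
  obtain ⟨x, y⟩ := v
  obtain ⟨a, b, hab, h0⟩ := hD
  by_cases hx : x = 0
  · by_cases hy : y = 0
    · exact ⟨0, 1, by rw [act_one, singRep0, hx, hy]⟩
    · have e : (x, y) = ((0:F) • y, (1:F) • y) := by rw [hx]; simp
      rw [e]
      exact scalar_case 0 1 (Or.inr one_ne_zero) hy
  · have hb : b ≠ 0 := by
      intro hb0
      rw [hb0, zero_smul, add_zero] at h0
      rcases hab with ha | hb'
      · exact hx (by simpa [ha] using smul_eq_zero.mp h0 |>.resolve_left ha)
      · exact hb' hb0
    have hy : y = (-a/b) • x := by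
      have : b • y = -(a • x) := by
        rw [eq_neg_iff_add_eq_zero, add_comm]
        exact h0
      calc y = b⁻¹ • (b • y) := by rw [smul_smul, inv_mul_cancel₀ hb, one_smul]
        _ = b⁻¹ • (-(a • x)) := by rw [this]
        _ = (-a/b) • x := by
              rw [smul_neg, smul_smul, ← neg_smul]
              congr 1
              field_simp
    have e : (x, y) = ((1:F) • x, (-a/b) • x) := by rw [one_smul, ← hy]
    rw [e]
    exact scalar_case 1 (-a/b) (Or.inl one_ne_zero) hx

end Classify

section Classify2
variable {F : Type*} [Field F]

lemma vecMulVec_smul_out_right (e : F) (p q : Fin 2 → F) :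
    vecMulVec p (e • q) = e • vecMulVec p q := by
  ext i j; simp [Matrix.vecMulVec_apply]; ring

lemma vecMulVec_smul_out_left (e : F) (p q : Fin 2 → F) :
    vecMulVec (e • p) q = e • vecMulVec p q := by
  ext i j; simp [Matrix.vecMulVec_apply]; ring

lemma conj_orbit' {x y x' y' : M2 F} (U : M2 F) (hU : U.det ≠ 0)
    (hx : U * x' = x * U) (hy : U * y' = y * U) : (x', y') ∈ orbit (x, y) := by
  refine ⟨(glD U hU, glD U hU, 1), ?_⟩
  rw [act_gl]
  show (((glD U hU)⁻¹ : GL (Fin 2) F).1 * x * U, ((glD U hU)⁻¹ : GL (Fin 2) F).1 * y * U) = _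
  rw [mul_assoc _ x U, ← hx, mul_assoc _ y U, ← hy, ← mul_assoc, ← mul_assoc,
    show ((glD U hU)⁻¹ : GL (Fin 2) F).1 * U = 1 from (glD U hU).inv_mul, one_mul, one_mul]

lemma pencil_orbit4 {x y : M2 F} (a b c d : F) (h : a*d - b*c ≠ 0) :
    (a • x + c • y, b • x + d • y) ∈ orbit (x, y) := by
  have h' : (!![a, b; c, d] : M2 F).det ≠ 0 := by rwa [Matrix.det_fin_two_of]
  have h2 := pencil_orbit (x := x) (y := y) _ h'
  simpa using h2

lemma classify_B1 (x y : M2 F) (hD : ¬ Dv (x, y)) (hdx : x.det = 0) (hdy : y.det = 0)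
    (hτ : trace (x * adjugate y) = 0) : ∃ i : Fin 6, singRep (F := F) i ∈ orbit (x, y) := by
  have hx : x ≠ 0 := fun h => hD ⟨1, 0, Or.inl one_ne_zero, by simp [h]⟩
  have hy : y ≠ 0 := fun h => hD ⟨0, 1, Or.inr one_ne_zero, by simp [h]⟩
  obtain ⟨p, q, hp, hq, hpq⟩ := rank1_decomp hx hdx
  obtain ⟨r, s, hr, hs, hrs⟩ := rank1_decomp hy hdy
  have hτ' : cross p r * cross q s = 0 := by rw [hpq, hrs, trace_rank1] at hτ; exact hτ
  rcases mul_eq_zero.mp hτ' with hc | hc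
  · -- common column line : orbit of x₃
    obtain ⟨c, hcr⟩ := cross_eq_zero_imp hp hc
    have hc0 : c ≠ 0 := by
      rintro rfl
      rw [zero_smul] at hcr
      exact hr hcr
    have hy' : y = vecMulVec p (c • s) := by
      rw [hrs, hcr, vecMulVec_smul_out_left, vecMulVec_smul_out_right]
    have hs'0 : c • s ≠ 0 := smul_ne_zero hc0 hs
    have hqs' : cross q (c • s) ≠ 0 := by
      intro h0
      obtain ⟨e, he⟩ := cross_eq_zero_imp hq h0
      apply hD
      refine ⟨e, -1, Or.inr (neg_ne_zero.mpr one_ne_zero), ?_⟩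
      show e • x + (-1 : F) • y = 0
      rw [hpq, hy', he, vecMulVec_smul_out_right, neg_one_smul, add_neg_eq_zero]
    obtain ⟨t, ht⟩ := exists_compl p hp
    have hU : (colMat p t).det ≠ 0 := by rwa [colMat_det]
    have hW : (rowMat q (c • s)).det ≠ 0 := by rwa [rowMat_det]
    refine ⟨3, ?_⟩
    rw [singRep3]
    refine conj_orbit _ _ hU hW ?_ ?_
    · rw [E11_eq, mul_vecMulVec_mul, colMat_mulVec_e0, rowMat_vecMul_e0, hpq]
    · rw [E12_eq, mul_vecMulVec_mul, colMat_mulVec_e0, rowMat_vecMul_e1, hy']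
  · -- common kernel : orbit of x₄
    obtain ⟨c, hcs⟩ := cross_eq_zero_imp hq hc
    have hc0 : c ≠ 0 := by
      rintro rfl
      rw [zero_smul] at hcs
      exact hs hcs
    have hy' : y = vecMulVec (c • r) q := by
      rw [hrs, hcs, vecMulVec_smul_out_right, vecMulVec_smul_out_left]
    have hr'0 : c • r ≠ 0 := smul_ne_zero hc0 hr
    have hpr' : cross p (c • r) ≠ 0 := by
      intro h0
      obtain ⟨e, he⟩ := cross_eq_zero_imp hp h0
      apply hD
      refine ⟨e, -1, Or.inr (neg_ne_zero.mpr one_ne_zero), ?_⟩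
      show e • x + (-1 : F) • y = 0
      rw [hpq, hy', he, vecMulVec_smul_out_left, neg_one_smul, add_neg_eq_zero]
    obtain ⟨t, ht⟩ := exists_compl q hq
    have hU : (colMat p (c • r)).det ≠ 0 := by rwa [colMat_det]
    have hW : (rowMat t q).det ≠ 0 := by
      rw [rowMat_det]
      intro h0
      apply ht
      unfold cross at h0 ⊢
      linear_combination -h0
    refine ⟨4, ?_⟩
    rw [singRep4]
    refine conj_orbit _ _ hU hW ?_ ?_
    · rw [E12_eq, mul_vecMulVec_mul, colMat_mulVec_e0, rowMat_vecMul_e1, hpq]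
    · rw [E22_eq, mul_vecMulVec_mul, colMat_mulVec_e1, rowMat_vecMul_e1, hy']

lemma nilp_orbit (h2 : (2:F) ≠ 0) (z : M2 F) (hz : ¬ Dv (z, (1:M2 F)))
    (hP : Pinv (z, (1:M2 F)) = 0) : (singRep 5 : M2 F × M2 F) ∈ orbit (z, (1:M2 F)) := by
  have htr : (trace z)^2 - 4 * z.det = 0 := by
    have h := hP
    rw [PinvEq] at h
    simpa [Matrix.adjugate_one, Matrix.det_one] using h
  set lam := trace z / 2 with hlam
  set n := z - lam • 1 with hn
  have hstep : ((n : M2 F), (1:M2 F)) ∈ orbit (z, (1:M2 F)) := by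
    have h := pencil_orbit4 (x := z) (y := (1:M2 F)) 1 0 (-lam) 1 (by norm_num)
    rw [one_smul, one_smul, zero_smul, zero_add, neg_smul, ← sub_eq_add_neg] at h
    exact h
  have hne : n ≠ 0 := by
    intro h0
    exact hz ⟨1, -lam, Or.inl one_ne_zero, by
      show (1:F) • z + (-lam) • (1 : M2 F) = 0
      rw [one_smul, neg_smul, ← sub_eq_add_neg]
      exact h0⟩
  have htrn : trace n = 0 := by
    rw [hn, Matrix.trace_sub, Matrix.trace_smul, Matrix.trace_one, hlam]
    simp only [Fintype.card_fin, smul_eq_mul, Nat.cast_ofNat]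
    field_simp
    ring
  have hdetn : n.det = 0 := by
    rw [hn]
    rw [Matrix.trace_fin_two] at htr hlam
    rw [Matrix.det_fin_two] at htr ⊢
    simp only [Matrix.sub_apply, Matrix.smul_apply, Matrix.one_apply_eq, Matrix.one_apply_ne,
      smul_eq_mul, hlam]
    norm_num
    field_simp
    linear_combination -htr
  have hsq : n * n = 0 := sq_zero_of n htrn hdetn
  have hcol : n *ᵥ ![1, 0] ≠ 0 ∨ n *ᵥ ![0, 1] ≠ 0 := by
    by_contra hcon
    push_neg at hcon
    apply hne
    ext i j
    fin_cases j
    · have := congrFun hcon.1 i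
      simpa [Matrix.mulVec, dotProduct, Fin.sum_univ_two] using this
    · have := congrFun hcon.2 i
      simpa [Matrix.mulVec, dotProduct, Fin.sum_univ_two] using this
  have main : ∀ e : Fin 2 → F, n *ᵥ e ≠ 0 → (singRep 5 : M2 F × M2 F) ∈ orbit (z, (1:M2 F)) := by
    intro e he
    set f := n *ᵥ e with hf
    have hnf : n *ᵥ f = 0 := by rw [hf, Matrix.mulVec_mulVec, hsq, Matrix.zero_mulVec]
    have hcr : cross f e ≠ 0 := by
      intro h0
      obtain ⟨c, hce⟩ := cross_eq_zero_imp he h0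
      apply he
      rw [hf]
      nth_rewrite 1 [hce]
      rw [Matrix.mulVec_smul, hnf, smul_zero]
    have hU : (colMat f e).det ≠ 0 := by rwa [colMat_det]
    have hzero : ∀ i, n i 0 * f 0 + n i 1 * f 1 = 0 := by
      intro i
      have := congrFun hnf i
      simpa [Matrix.mulVec, dotProduct, Fin.sum_univ_two] using this
    have hcomp : ∀ i, n i 0 * e 0 + n i 1 * e 1 = f i := by
      intro i
      rw [hf]
      simp [Matrix.mulVec, dotProduct, Fin.sum_univ_two]
    have key : colMat f e * !![(0:F), 1; 0, 0] = n * colMat f e := by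
      ext i j
      fin_cases i <;> fin_cases j <;>
        simp [colMat, Matrix.mul_apply, Fin.sum_univ_two]
      all_goals first
        | linear_combination hzero 0 | linear_combination -hzero 0
        | linear_combination hcomp 0 | linear_combination -hcomp 0
        | linear_combination hzero 1 | linear_combination -hzero 1
        | linear_combination hcomp 1 | linear_combination -hcomp 1
    refine orbit_trans hstep ?_
    rw [singRep5]
    exact conj_orbit' _ hU key (by rw [mul_one, one_mul])
  rcases hcol with he | he
  · exact main _ he
  · exact main _ he

end Classify2

section Master
variable {F : Type*} [Field F]

lemma classify (h2 : (2:F) ≠ 0) (v : M2 F × M2 F) (hP : Pinv v = 0) :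
    ∃ i : Fin 6, singRep (F := F) i ∈ orbit v := by
  by_cases hD : Dv v
  · exact classify_dep v hD
  obtain ⟨x, y⟩ := v
  by_cases hQ : x.det = 0 ∧ y.det = 0 ∧ trace (x * adjugate y) = 0
  · exact classify_B1 x y hD hQ.1 hQ.2.1 hQ.2.2
  · have step : ∃ x' y' : M2 F, (x', y') ∈ orbit (x, y) ∧ y'.det ≠ 0 := by
      by_cases hy : y.det ≠ 0
      · exact ⟨x, y, orbit_refl _, hy⟩
      by_cases hx : x.det ≠ 0
      · refine ⟨y, x, ?_, hx⟩
        have h := pencil_orbit4 (x := x) (y := y) 0 1 1 0 (by norm_num)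
        simp only [one_smul, zero_smul, add_zero, zero_add] at h
        exact h
      · push_neg at hx hy
        have hτ : trace (x * adjugate y) ≠ 0 := by tauto
        refine ⟨x, x + y, ?_, ?_⟩
        · have h := pencil_orbit4 (x := x) (y := y) 1 1 0 1 (by norm_num)
          simp only [one_smul, zero_smul, add_zero] at h
          exact h
        · rw [det_add_fin2, hx, hy, zero_add, add_zero]
          exact hτ
    obtain ⟨x', y', hmem, hy'⟩ := step
    have hP' : Pinv (x', y') = 0 := Pinv_orbit_zero hmem hP
    have hstep2 : (x' * (((glD y' hy')⁻¹ : GL (Fin 2) F) : M2 F), (1:M2 F)) ∈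
        orbit (x', y') := by
      refine conj_orbit 1 y' (by simp) hy' ?_ ?_
      · rw [one_mul, mul_assoc, glD_inv_mul, mul_one]
      · rw [one_mul, one_mul]
    set z := x' * (((glD y' hy')⁻¹ : GL (Fin 2) F) : M2 F) with hz
    have hmem2 : (z, (1:M2 F)) ∈ orbit (x, y) := orbit_trans hmem hstep2
    have hD'' : ¬ Dv (z, (1:M2 F)) := fun h => hD ((orbit_iff_inv Dv_act hmem2).mp h)
    have hP'' : Pinv (z, (1:M2 F)) = 0 := Pinv_orbit_zero hmem2 hP
    exact ⟨5, orbit_trans hmem2 (nilp_orbit h2 z hD'' hP'')⟩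

end Master

section Facts
variable {F : Type*} [Field F]

lemma entry_ne {m : M2 F} (i j : Fin 2) (h : m i j ≠ 0) : m ≠ 0 :=
  fun hc => h (by rw [hc]; simp)

lemma repZ0 : (singRep 0 : M2 F × M2 F) = 0 := by rw [singRep0]; rfl

lemma repNZ1 : (singRep 1 : M2 F × M2 F) ≠ 0 := by
  rw [singRep1]
  intro h
  exact entry_ne (m := (!![0,1;0,0] : M2 F)) 0 1 (by norm_num) (congrArg Prod.snd h)

lemma repNZ2 : (singRep 2 : M2 F × M2 F) ≠ 0 := by
  rw [singRep2]
  intro h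
  exact entry_ne (m := (1 : M2 F)) 0 0 (by norm_num) (congrArg Prod.snd h)

lemma repNZ3 : (singRep 3 : M2 F × M2 F) ≠ 0 := by
  rw [singRep3]
  intro h
  exact entry_ne (m := (!![1,0;0,0] : M2 F)) 0 0 (by norm_num) (congrArg Prod.fst h)

lemma repNZ4 : (singRep 4 : M2 F × M2 F) ≠ 0 := by
  rw [singRep4]
  intro h
  exact entry_ne (m := (!![0,1;0,0] : M2 F)) 0 1 (by norm_num) (congrArg Prod.fst h)

lemma repNZ5 : (singRep 5 : M2 F × M2 F) ≠ 0 := by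
  rw [singRep5]
  intro h
  exact entry_ne (m := (!![0,1;0,0] : M2 F)) 0 1 (by norm_num) (congrArg Prod.fst h)

lemma repD1 : Dv (singRep 1 : M2 F × M2 F) := ⟨1, 0, Or.inl one_ne_zero, by rw [singRep1]; simp⟩
lemma repD2 : Dv (singRep 2 : M2 F × M2 F) := ⟨1, 0, Or.inl one_ne_zero, by rw [singRep2]; simp⟩

lemma repND3 : ¬ Dv (singRep 3 : M2 F × M2 F) := by
  rintro ⟨a, b, hab, h⟩
  rw [singRep3] at h
  have h1 := congrFun (congrFun h 0) 0
  have h2 := congrFun (congrFun h 0) 1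
  simp [Matrix.add_apply, Matrix.smul_apply] at h1 h2
  tauto

lemma repND4 : ¬ Dv (singRep 4 : M2 F × M2 F) := by
  rintro ⟨a, b, hab, h⟩
  rw [singRep4] at h
  have h1 := congrFun (congrFun h 0) 1
  have h2 := congrFun (congrFun h 1) 1
  simp [Matrix.add_apply, Matrix.smul_apply] at h1 h2
  tauto

lemma repND5 : ¬ Dv (singRep 5 : M2 F × M2 F) := by
  rintro ⟨a, b, hab, h⟩
  rw [singRep5] at h
  have h1 := congrFun (congrFun h 0) 1
  have h2 := congrFun (congrFun h 0) 0
  simp [Matrix.add_apply, Matrix.smul_apply, Matrix.one_apply] at h1 h2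
  tauto

lemma repQ1 : Qv (singRep 1 : M2 F × M2 F) := by
  intro a b
  rw [singRep1]
  simp [Matrix.det_fin_two, Matrix.smul_apply, Matrix.add_apply]

lemma repQ3 : Qv (singRep 3 : M2 F × M2 F) := by
  intro a b
  rw [singRep3]
  simp [Matrix.det_fin_two, Matrix.smul_apply, Matrix.add_apply]

lemma repQ4 : Qv (singRep 4 : M2 F × M2 F) := by
  intro a b
  rw [singRep4]
  simp [Matrix.det_fin_two, Matrix.smul_apply, Matrix.add_apply]

lemma repNQ2 : ¬ Qv (singRep 2 : M2 F × M2 F) := by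
  intro h
  have := h 0 1
  rw [singRep2] at this
  simp at this

lemma repNQ5 : ¬ Qv (singRep 5 : M2 F × M2 F) := by
  intro h
  have := h 0 1
  rw [singRep5] at this
  simp at this

lemma repC3 : Cv (singRep 3 : M2 F × M2 F) := by
  refine ⟨![0, 1], ?_, ?_, ?_⟩
  · rw [vec_ne_zero_iff]; right; norm_num
  · rw [singRep3]
    funext i
    fin_cases i <;> simp [Matrix.vecMul, dotProduct, Fin.sum_univ_two]
  · rw [singRep3]
    funext i
    fin_cases i <;> simp [Matrix.vecMul, dotProduct, Fin.sum_univ_two]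

lemma repNC4 : ¬ Cv (singRep 4 : M2 F × M2 F) := by
  rintro ⟨φ, hφ, h1, h2⟩
  rw [singRep4] at h1 h2
  apply hφ
  have e1 := congrFun h1 1
  have e2 := congrFun h2 1
  simp [Matrix.vecMul, dotProduct, Fin.sum_univ_two] at e1 e2
  funext i
  fin_cases i <;> simpa using by assumption

lemma Pi0 : Pinv (singRep (F := F) 0) = 0 := by rw [singRep0, PinvEq]; simp
lemma Pi1 : Pinv (singRep (F := F) 1) = 0 := by rw [singRep1, PinvEq]; simp
lemma Pi2 : Pinv (singRep (F := F) 2) = 0 := by rw [singRep2, PinvEq]; simp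
lemma Pi3 : Pinv (singRep (F := F) 3) = 0 := by
  rw [singRep3, PinvEq, Matrix.adjugate_fin_two]
  simp [Matrix.det_fin_two, Matrix.trace_fin_two, Matrix.mul_apply, Fin.sum_univ_two]
lemma Pi4 : Pinv (singRep (F := F) 4) = 0 := by
  rw [singRep4, PinvEq, Matrix.adjugate_fin_two]
  simp [Matrix.det_fin_two, Matrix.trace_fin_two, Matrix.mul_apply, Fin.sum_univ_two]
lemma Pi5 : Pinv (singRep (F := F) 5) = 0 := by
  rw [singRep5, PinvEq, Matrix.adjugate_fin_two]
  simp [Matrix.det_fin_two, Matrix.trace_fin_two, Matrix.mul_apply, Fin.sum_univ_two]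

lemma Pinv_rep (i : Fin 6) : Pinv (singRep (F := F) i) = 0 := by
  fin_cases i
  exacts [Pi0, Pi1, Pi2, Pi3, Pi4, Pi5]

lemma orbit_disjoint_of {I : M2 F × M2 F → Prop} (H : ∀ v g, I v → I (act v g))
    {v₁ v₂ : M2 F × M2 F} (h1 : I v₁) (h2 : ¬ I v₂) :
    Disjoint (orbit v₁) (orbit v₂) := by
  rw [Set.disjoint_left]
  intro w hw1 hw2
  exact h2 ((orbit_iff_inv H hw2).mp ((orbit_iff_inv H hw1).mpr h1))

end Facts

set_option maxHeartbeats 2000000 in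
theorem stmt2' {F : Type*} [Field F] (h2 : (2 : F) ≠ 0) :
    ({v : M2 F × M2 F | Pinv v = 0} = ⋃ i : Fin 6, orbit (singRep (F := F) i)) ∧
    (∀ i j : Fin 6, i ≠ j →
      Disjoint (orbit (singRep (F := F) i)) (orbit (singRep (F := F) j))) := by
  constructor
  · ext v
    simp only [Set.mem_setOf_eq, Set.mem_iUnion]
    constructor
    · intro hP
      obtain ⟨i, hi⟩ := classify h2 v hP
      exact ⟨i, orbit_symm hi⟩
    · rintro ⟨i, hi⟩
      exact Pinv_orbit_zero hi (Pinv_rep i)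
  · have ZH : ∀ (v : M2 F × M2 F) g, v = 0 → act v g = 0 := fun v g hv => Zv_act v g hv
    intro i j hij
    fin_cases i <;> fin_cases j
    exacts [absurd rfl hij,
      orbit_disjoint_of ZH repZ0 repNZ1,
      orbit_disjoint_of ZH repZ0 repNZ2,
      orbit_disjoint_of ZH repZ0 repNZ3,
      orbit_disjoint_of ZH repZ0 repNZ4,
      orbit_disjoint_of ZH repZ0 repNZ5,
      (orbit_disjoint_of ZH repZ0 repNZ1).symm,
      absurd rfl hij,
      orbit_disjoint_of Qv_act repQ1 repNQ2,
      orbit_disjoint_of Dv_act repD1 repND3,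
      orbit_disjoint_of Dv_act repD1 repND4,
      orbit_disjoint_of Dv_act repD1 repND5,
      (orbit_disjoint_of ZH repZ0 repNZ2).symm,
      (orbit_disjoint_of Qv_act repQ1 repNQ2).symm,
      absurd rfl hij,
      orbit_disjoint_of Dv_act repD2 repND3,
      orbit_disjoint_of Dv_act repD2 repND4,
      orbit_disjoint_of Dv_act repD2 repND5,
      (orbit_disjoint_of ZH repZ0 repNZ3).symm,
      (orbit_disjoint_of Dv_act repD1 repND3).symm,
      (orbit_disjoint_of Dv_act repD2 repND3).symm,
      absurd rfl hij,
      orbit_disjoint_of Cv_act repC3 repNC4,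
      orbit_disjoint_of Qv_act repQ3 repNQ5,
      (orbit_disjoint_of ZH repZ0 repNZ4).symm,
      (orbit_disjoint_of Dv_act repD1 repND4).symm,
      (orbit_disjoint_of Dv_act repD2 repND4).symm,
      (orbit_disjoint_of Cv_act repC3 repNC4).symm,
      absurd rfl hij,
      orbit_disjoint_of Qv_act repQ4 repNQ5,
      (orbit_disjoint_of ZH repZ0 repNZ5).symm,
      (orbit_disjoint_of Dv_act repD1 repND5).symm,
      (orbit_disjoint_of Dv_act repD2 repND5).symm,
      (orbit_disjoint_of Qv_act repQ3 repNQ5).symm,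
      (orbit_disjoint_of Qv_act repQ4 repNQ5).symm,
      absurd rfl hij]

/-- in characteristic ≠ 2 the singular set `{P = 0}` is the disjoint union of
the `G`-orbits of `x₀ = (0,0)`, `x₁ = (0,E₁₂)`, `x₂ = (0,I₂)`, `x₃ = (E₁₁,E₁₂)`,
`x₄ = (E₁₂,E₂₂)`, `x₅ = (E₁₂,I₂)`. -/
theorem stmt2 {F : Type*} [Field F] (h2 : (2 : F) ≠ 0) :
    ({v : M2 F × M2 F | Pinv v = 0} = ⋃ i : Fin 6, orbit (singRep (F := F) i)) ∧
    (∀ i j : Fin 6, i ≠ j →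
      Disjoint (orbit (singRep (F := F) i)) (orbit (singRep (F := F) j))) :=
  stmt2' h2
end

section
/- For every j ∈ ℕ, setting B_j := Σ_{l≥0} β(j+l)²·Xˡ and C_j := Σ_{l≥0} β(j+l+1)·β(j+l)·Xˡ in ℝ⟦X⟧, one has (1 + q⁻¹·X)·C_j = q⁻¹λ·B_j + (β(j)·β(j+1) − q⁻¹λ·β(j)²). -/
/-- with `B_j = Σ β(j+l)²Xˡ` and `C_j = Σ β(j+l+1)β(j+l)Xˡ`,
`(1 + q⁻¹X)·C_j = q⁻¹λ·B_j + (β(j)β(j+1) − q⁻¹λβ(j)²)` in `ℝ⟦X⟧`. -/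
theorem stmt8 (q lam : ℝ) (hq : q ≠ 0) (β : ℕ → ℝ)
    (hrec : ∀ k : ℕ, q * β (k + 2) - lam * β (k + 1) + β k = 0) (j : ℕ) :
    (1 + PowerSeries.C q⁻¹ * PowerSeries.X) *
        PowerSeries.mk (fun l => β (j + l + 1) * β (j + l)) =
      PowerSeries.C (q⁻¹ * lam) * PowerSeries.mk (fun l => β (j + l) ^ 2) +
        PowerSeries.C (β j * β (j + 1) - q⁻¹ * lam * β j ^ 2) := by
  ext n
  cases n with
  | zero =>
    simp [PowerSeries.coeff_mul, PowerSeries.coeff_one, PowerSeries.coeff_C]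
    ring
  | succ m =>
    have h := hrec (j + m)
    rw [add_mul, one_mul, mul_assoc, map_add, map_add,
      PowerSeries.coeff_C_mul, PowerSeries.coeff_succ_X_mul,
      PowerSeries.coeff_C_mul, PowerSeries.coeff_mk, PowerSeries.coeff_mk,
      PowerSeries.coeff_mk, PowerSeries.coeff_C, if_neg (Nat.succ_ne_zero m)]
    have e1 : j + (m + 1) = j + m + 1 := by ring
    have e2 : j + (m + 1) + 1 = j + m + 2 := by ring
    rw [e1]
    have hb : β (j + m + 2) = q⁻¹ * (lam * β (j + m + 1) - β (j + m)) := by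
      field_simp; linarith
    rw [hb]; ring
end

section
/- For every j ∈ ℕ, setting B_j := Σ_{l≥0} β(j+l)²·Xˡ in ℝ⟦X⟧, one has (1 − (q⁻¹λ² − 1)·q⁻¹·X + (q⁻¹λ² − 1)·q⁻²·X² − q⁻³·X³)·B_j = β(j)² + (β(j+1)² − q⁻¹·(q⁻¹λ² − 1)·β(j)²)·X + q⁻¹·(β(j+1) − q⁻¹λ·β(j))²·X². -/
/-- with `B_j = Σ β(j+l)²Xˡ`,
`(1 − (q⁻¹λ² − 1)q⁻¹X + (q⁻¹λ² − 1)q⁻²X² − q⁻³X³)·B_j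
  = β(j)² + (β(j+1)² − q⁻¹(q⁻¹λ² − 1)β(j)²)·X + q⁻¹(β(j+1) − q⁻¹λβ(j))²·X²` in `ℝ⟦X⟧`. -/
theorem stmt9 (q lam : ℝ) (hq : q ≠ 0) (β : ℕ → ℝ)
    (hrec : ∀ k : ℕ, q * β (k + 2) - lam * β (k + 1) + β k = 0) (j : ℕ) :
    (1 - PowerSeries.C ((q⁻¹ * lam ^ 2 - 1) * q⁻¹) * PowerSeries.X +
        PowerSeries.C ((q⁻¹ * lam ^ 2 - 1) * q⁻¹ ^ 2) * PowerSeries.X ^ 2 -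
        PowerSeries.C (q⁻¹ ^ 3) * PowerSeries.X ^ 3) *
      PowerSeries.mk (fun l => β (j + l) ^ 2) =
    PowerSeries.C (β j ^ 2) +
      PowerSeries.C (β (j + 1) ^ 2 - q⁻¹ * (q⁻¹ * lam ^ 2 - 1) * β j ^ 2) *
        PowerSeries.X +
      PowerSeries.C (q⁻¹ * (β (j + 1) - q⁻¹ * lam * β j) ^ 2) * PowerSeries.X ^ 2 := by
  have key : ∀ k : ℕ, β (k+3)^2 = (q⁻¹*lam^2-1)*q⁻¹*β (k+2)^2
      - (q⁻¹*lam^2-1)*q⁻¹^2*β (k+1)^2 + q⁻¹^3*β k^2 := by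
    intro k
    have h1 := hrec k
    have h2 := hrec (k+1)
    have e2 : β (k+2) = (lam*β (k+1) - β k)/q := by field_simp; linarith
    have e3 : β (k+3) = (lam*β (k+2) - β (k+1))/q := by
      have h : k + 1 + 2 = k + 3 := by ring
      rw [h] at h2
      field_simp; linarith
    rw [e3, e2]; field_simp; ring
  have hx : ∀ m : ℕ, PowerSeries.coeff m
      (PowerSeries.X * PowerSeries.mk (fun l => β (j+l)^2))
      = if 1 ≤ m then β (j + (m-1))^2 else 0 := by
    intro m
    rw [← pow_one (PowerSeries.X : PowerSeries ℝ), PowerSeries.coeff_X_pow_mul']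
    simp
  ext n
  simp only [sub_mul, add_mul, one_mul, mul_assoc, map_sub, map_add,
    PowerSeries.coeff_C_mul, PowerSeries.coeff_X_pow_mul', hx,
    PowerSeries.coeff_mk, PowerSeries.coeff_one, PowerSeries.coeff_X, PowerSeries.coeff_X_pow, PowerSeries.coeff_C]
  match n with
  | 0 => norm_num
  | 1 => norm_num; ring
  | 2 =>
    have e2 : β (j+2) = (lam*β (j+1) - β j)/q := by
      have := hrec j; field_simp; linarith
    norm_num [e2]
    field_simp
    ring
  | (n+3) =>
    norm_num [show ¬ (n+3 = 0) by omega, show ¬ (n+3 = 1) by omega, show ¬ (n+3 = 2) by omega,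
      show (1:ℕ) ≤ n+3 by omega, show (2:ℕ) ≤ n+3 by omega, show (3:ℕ) ≤ n+3 by omega,
      show n+3-1 = n+2 by omega, show n+3-2 = n+1 by omega, show n+3-3 = n by omega,
      show j+(n+3) = (j+n)+3 by ring, show j+(n+2) = (j+n)+2 by ring, show j+(n+1) = (j+n)+1 by ring]
    rw [key (j+n)]; ring
end

section
/- Setting T := Σ_{k≥1, l≥0, u≥0} β(k+u)·β(k+l+u+1)·Xᵏ·Yˡ·Zᵘ in the ring of formal power series in three variables X, Y, Z over ℝ, one has (1 + q⁻¹·Z)·(1 − λq⁻¹·Y + q⁻¹·Y²)·T = (q⁻¹λ − q⁻¹·Y − q⁻²·YZ)·(Σ_{k≥0, u≥0} β(k+u+1)²·X^{k+1}·Zᵘ) − q⁻¹·(Σ_{l≥0} β(l+1)·β(l)·X^{l+1}). -/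
/-- The formal power series in three variables `X = X 0`, `Y = X 1`, `Z = X 2` over `ℝ`
with coefficient `f a b c` on `Xᵃ·Yᵇ·Zᶜ`. -/
def mk3 (f : ℕ → ℕ → ℕ → ℝ) : MvPowerSeries (Fin 3) ℝ := fun m => f (m 0) (m 1) (m 2)

open MvPowerSeries Finsupp

lemma coeff_mk3 (f : ℕ → ℕ → ℕ → ℝ) (m : Fin 3 →₀ ℕ) :
    MvPowerSeries.coeff m (mk3 f) = f (m 0) (m 1) (m 2) := rfl

lemma C_mul_mk3 (c : ℝ) (f : ℕ → ℕ → ℕ → ℝ) :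
    MvPowerSeries.C (σ := Fin 3) (R := ℝ) c * mk3 f = mk3 (fun a b u => c * f a b u) := by
  ext m; rw [coeff_C_mul, coeff_mk3, coeff_mk3]

lemma Xi_mul_mk3 (i : Fin 3) (f : ℕ → ℕ → ℕ → ℝ) :
    MvPowerSeries.X i * mk3 f =
      mk3 (fun a b u =>
        if i = 0 then (if 1 ≤ a then f (a-1) b u else 0)
        else if i = 1 then (if 1 ≤ b then f a (b-1) u else 0)
        else (if 1 ≤ u then f a b (u-1) else 0)) := by
  ext m
  rw [MvPowerSeries.X, coeff_monomial_mul, coeff_mk3]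
  fin_cases i <;>
    simp [Finsupp.single_le_iff, tsub_apply, Finsupp.single_apply, coeff_mk3]

lemma X0_mul_mk3 (f : ℕ → ℕ → ℕ → ℝ) :
    MvPowerSeries.X (0 : Fin 3) * mk3 f =
      mk3 (fun a b u => if 1 ≤ a then f (a-1) b u else 0) := by
  simpa using Xi_mul_mk3 0 f

lemma X1_mul_mk3 (f : ℕ → ℕ → ℕ → ℝ) :
    MvPowerSeries.X (1 : Fin 3) * mk3 f =
      mk3 (fun a b u => if 1 ≤ b then f a (b-1) u else 0) := by
  simpa using Xi_mul_mk3 1 f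

lemma X2_mul_mk3 (f : ℕ → ℕ → ℕ → ℝ) :
    MvPowerSeries.X (2 : Fin 3) * mk3 f =
      mk3 (fun a b u => if 1 ≤ u then f a b (u-1) else 0) := by
  simpa using Xi_mul_mk3 2 f

lemma mk3_add (f g : ℕ → ℕ → ℕ → ℝ) :
    mk3 f + mk3 g = mk3 (fun a b u => f a b u + g a b u) := rfl

lemma mk3_sub (f g : ℕ → ℕ → ℕ → ℝ) :
    mk3 f - mk3 g = mk3 (fun a b u => f a b u - g a b u) := rfl


/-- with `T = Σ_{k≥1, l≥0, u≥0} β(k+u)β(k+l+u+1)XᵏYˡZᵘ`,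
`(1 + q⁻¹Z)(1 − λq⁻¹Y + q⁻¹Y²)·T
  = (q⁻¹λ − q⁻¹Y − q⁻²YZ)·(Σ_{k,u≥0} β(k+u+1)²X^{k+1}Zᵘ)
    − q⁻¹·(Σ_{l≥0} β(l+1)β(l)X^{l+1})`. -/
theorem stmt12 (q lam : ℝ) (hq : q ≠ 0) (β : ℕ → ℝ)
    (hrec : ∀ k : ℕ, q * β (k + 2) - lam * β (k + 1) + β k = 0) :
    (1 + MvPowerSeries.C (σ := Fin 3) (R := ℝ) q⁻¹ * MvPowerSeries.X 2) *
      (1 - MvPowerSeries.C (σ := Fin 3) (R := ℝ) (lam * q⁻¹) * MvPowerSeries.X 1 +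
        MvPowerSeries.C (σ := Fin 3) (R := ℝ) q⁻¹ * MvPowerSeries.X 1 ^ 2) *
      mk3 (fun k l u => if 1 ≤ k then β (k + u) * β (k + l + u + 1) else 0) =
    (MvPowerSeries.C (σ := Fin 3) (R := ℝ) (q⁻¹ * lam) -
        MvPowerSeries.C (σ := Fin 3) (R := ℝ) q⁻¹ * MvPowerSeries.X 1 -
        MvPowerSeries.C (σ := Fin 3) (R := ℝ) (q⁻¹ ^ 2) * MvPowerSeries.X 1 * MvPowerSeries.X 2) *
      (MvPowerSeries.X 0 * mk3 (fun k l u => if l = 0 then β (k + u + 1) ^ 2 else 0)) -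
    MvPowerSeries.C (σ := Fin 3) (R := ℝ) q⁻¹ *
      (MvPowerSeries.X 0 *
        mk3 (fun a b c => if b = 0 ∧ c = 0 then β (a + 1) * β a else 0)) := by
  simp only [pow_two, add_mul, sub_mul, mul_add, mul_sub, one_mul, mul_one, mul_assoc]
  simp only [X0_mul_mk3, X1_mul_mk3, X2_mul_mk3, C_mul_mk3, mk3_add, mk3_sub]
  ext m
  simp only [coeff_mk3]
  generalize m 0 = a
  generalize m 1 = b
  generalize m 2 = c
  have h3 : ∀ n : ℕ, q * β (n+3) - lam * β (n+2) + β (n+1) = 0 := fun n => hrec (n+1)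
  have h4 : ∀ n : ℕ, q * β (n+4) - lam * β (n+3) + β (n+2) = 0 := fun n => hrec (n+2)
  have h5 : ∀ n : ℕ, q * β (n+5) - lam * β (n+4) + β (n+3) = 0 := fun n => hrec (n+3)
  rcases a with _ | a
  · simp
  rcases b with _ | _ | b <;> rcases c with _ | c <;>
      simp [Nat.succ_le_iff, Nat.add_assoc, Nat.add_comm, Nat.add_left_comm] <;> field_simp
  · linear_combination (norm := ring_nf) β (a+1) * hrec a
  · linear_combination (norm := ring_nf) β (a+c+2) * h3 (a+c)
  · linear_combination (norm := ring_nf) β (a+1) * hrec (a+1)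
  · linear_combination (norm := ring_nf) q * β (a+c+2) * h4 (a+c) + β (a+c+1) * h3 (a+c)
  · linear_combination (norm := ring_nf) β (a+1) * h4 (a+b)
  · linear_combination (norm := ring_nf) q * β (a+c+2) * h5 (a+b+c) + β (a+c+1) * h4 (a+b+c)
end

section
/- For every (y₁,y₁₂,y₂) ∈ ℚ_p³ such that y₁₂² − 4y₁y₂ = d·c² for some c ∈ ℚ_pˣ, there exist unique l₁ ∈ ℤ and l₂ ∈ ℕ for which there are u ∈ ℤ_pˣ and k ∈ GL₂(ℤ_p) with M(y₁,y₁₂,y₂) = p^{l₁} · (u / det k) · kᵀ · diag(1, −d·p^{2l₂}) · k. -/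
open Matrix

/-- The coercion of a matrix over `ℤ_p` to a matrix over `ℚ_p`. -/
noncomputable def coeM {p : ℕ} [Fact p.Prime] (k : Matrix (Fin 2) (Fin 2) ℤ_[p]) :
    Matrix (Fin 2) (Fin 2) ℚ_[p] :=
  k.map (fun z => (z : ℚ_[p]))

namespace Stmt16Aux
variable {p : ℕ} [Fact p.Prime]

def toZp (x : ℚ_[p]) (h : ‖x‖ ≤ 1) : ℤ_[p] := ⟨x, h⟩

@[simp] lemma toZp_coe (x : ℚ_[p]) (h : ‖x‖ ≤ 1) : ((toZp x h : ℤ_[p]) : ℚ_[p]) = x := rfl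

lemma toZp_norm (x : ℚ_[p]) (h : ‖x‖ ≤ 1) : ‖toZp x h‖ = ‖x‖ := rfl

lemma coeM_eq (k : Matrix (Fin 2) (Fin 2) ℤ_[p]) :
    coeM k = k.map (PadicInt.Coe.ringHom (p := p)) := rfl

lemma coeM_mul (a b : Matrix (Fin 2) (Fin 2) ℤ_[p]) : coeM (a * b) = coeM a * coeM b := by
  simp [coeM_eq, Matrix.map_mul]

lemma coeM_transpose (a : Matrix (Fin 2) (Fin 2) ℤ_[p]) : coeM aᵀ = (coeM a)ᵀ := by
  simp [coeM_eq, Matrix.transpose_map]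

lemma coeM_apply (a : Matrix (Fin 2) (Fin 2) ℤ_[p]) (i j : Fin 2) :
    coeM a i j = ((a i j : ℤ_[p]) : ℚ_[p]) := rfl

lemma coeM_det (a : Matrix (Fin 2) (Fin 2) ℤ_[p]) : (coeM a).det = ((a.det : ℤ_[p]) : ℚ_[p]) := by
  rw [coeM_eq]; exact (RingHom.map_det (PadicInt.Coe.ringHom) a).symm

/-- transporting a diagonalization along a change of basis -/
lemma transport (D N N' : Matrix (Fin 2) (Fin 2) ℚ_[p]) (s : ℚ_[p])
    (g k : GL (Fin 2) ℤ_[p])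
    (hN : N = (coeM (g : Matrix (Fin 2) (Fin 2) ℤ_[p]))ᵀ * N' * coeM (g : Matrix (Fin 2) (Fin 2) ℤ_[p]))
    (h : N' = s • ((coeM (k : Matrix (Fin 2) (Fin 2) ℤ_[p]))ᵀ * D * coeM (k : Matrix (Fin 2) (Fin 2) ℤ_[p]))) :
    N = s • ((coeM ((k * g : GL (Fin 2) ℤ_[p]) : Matrix (Fin 2) (Fin 2) ℤ_[p]))ᵀ * D *
      coeM ((k * g : GL (Fin 2) ℤ_[p]) : Matrix (Fin 2) (Fin 2) ℤ_[p])) := by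
  subst h hN
  rw [Units.val_mul, coeM_mul, Matrix.transpose_mul]
  rw [Matrix.mul_smul, Matrix.smul_mul]
  congr 1
  simp only [Matrix.mul_assoc]

/-- core: diagonalize when the (0,0) entry is a unit. -/
lemma core (d : ℤ_[p]) (A B C ε : ℚ_[p]) (l₂ : ℕ)
    (hA : ‖A‖ = 1) (hB : ‖B‖ ≤ 1) (hε : ‖ε‖ = 1)
    (hdisc : B ^ 2 - A * C = (d : ℚ_[p]) * ((p : ℚ_[p]) ^ l₂ * ε) ^ 2) :
    ∃ (v : ℤ_[p]ˣ) (k : GL (Fin 2) ℤ_[p]),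
      !![A, B; B, C] = (((v : ℤ_[p]) : ℚ_[p])) •
        ((coeM (k : Matrix (Fin 2) (Fin 2) ℤ_[p]))ᵀ *
          Matrix.diagonal ![1, -(d : ℚ_[p]) * (p : ℚ_[p]) ^ (2 * l₂)] *
          coeM (k : Matrix (Fin 2) (Fin 2) ℤ_[p])) := by
  have hA0 : A ≠ 0 := by intro h; rw [h] at hA; simp at hA
  have hBA : ‖B / A‖ ≤ 1 := by rw [norm_div, hA]; simpa using hB
  have hεA : ‖ε / A‖ = 1 := by rw [norm_div, hA, hε]; simp
  set km : Matrix (Fin 2) (Fin 2) ℤ_[p] :=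
    !![1, toZp (B/A) hBA; 0, toZp (ε/A) (le_of_eq hεA)] with hkm
  have hdet : km.det = toZp (ε/A) (le_of_eq hεA) := by
    simp [hkm, Matrix.det_fin_two_of]
  have hdetu : IsUnit km.det := by
    rw [hdet, PadicInt.isUnit_iff]
    simpa [toZp, PadicInt.norm_def] using hεA
  have hku : IsUnit km := (Matrix.isUnit_iff_isUnit_det km).mpr hdetu
  have hAu : IsUnit (toZp A (le_of_eq hA)) :=
    PadicInt.isUnit_iff.mpr (by simpa [toZp, PadicInt.norm_def] using hA)
  refine ⟨hAu.unit, hku.unit, ?_⟩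
  have hkval : (hku.unit : Matrix (Fin 2) (Fin 2) ℤ_[p]) = km := hku.unit_spec
  have hvval : ((hAu.unit : ℤ_[p]) : ℚ_[p]) = A := by rw [hAu.unit_spec]; rfl
  rw [hkval, hvval]
  ext i j
  fin_cases i <;> fin_cases j <;>
    simp [hkm, coeM, Matrix.mul_apply, Fin.sum_univ_two, Matrix.smul_apply,
      Matrix.diagonal, Matrix.transpose_apply] <;>
    field_simp <;>
    linear_combination -hdisc


/-- existence: diagonalize a primitive integral binary form. -/
lemma exist2 (hp : Odd p) (d : ℤ_[p]) (A B C ε : ℚ_[p]) (l₂ : ℕ)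
    (hA : ‖A‖ ≤ 1) (hB : ‖B‖ ≤ 1) (hC : ‖C‖ ≤ 1) (hε : ‖ε‖ = 1)
    (hmax : max (max ‖A‖ ‖B‖) ‖C‖ = 1)
    (hdisc : B ^ 2 - A * C = (d : ℚ_[p]) * ((p : ℚ_[p]) ^ l₂ * ε) ^ 2) :
    ∃ (v : ℤ_[p]ˣ) (k : GL (Fin 2) ℤ_[p]),
      !![A, B; B, C] = (((v : ℤ_[p]) : ℚ_[p])) •
        ((coeM (k : Matrix (Fin 2) (Fin 2) ℤ_[p]))ᵀ *
          Matrix.diagonal ![1, -(d : ℚ_[p]) * (p : ℚ_[p]) ^ (2 * l₂)] *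
          coeM (k : Matrix (Fin 2) (Fin 2) ℤ_[p])) := by
  by_cases hA1 : ‖A‖ = 1
  · exact core d A B C ε l₂ hA1 hB hε hdisc
  by_cases hC1 : ‖C‖ = 1
  · -- swap the two variables
    have hdisc' : B ^ 2 - C * A = (d : ℚ_[p]) * ((p : ℚ_[p]) ^ l₂ * ε) ^ 2 := by
      linear_combination hdisc
    obtain ⟨v, k, hk⟩ := core d C B A ε l₂ hC1 hB hε hdisc'
    have hSu : IsUnit (!![(0:ℤ_[p]), 1; 1, 0]) := by
      rw [Matrix.isUnit_iff_isUnit_det, Matrix.det_fin_two_of]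
      simpa using (isUnit_one (M := ℤ_[p])).neg
    refine ⟨v, k * hSu.unit, transport _ _ _ _ hSu.unit k ?_ hk⟩
    rw [hSu.unit_spec]
    ext i j
    fin_cases i <;> fin_cases j <;>
      simp [coeM, Matrix.mul_apply, Fin.sum_univ_two]
  · -- here ‖B‖ = 1 and we translate
    have hB1 : ‖B‖ = 1 := by
      rcases max_choice (max ‖A‖ ‖B‖) ‖C‖ with h | h
      · rcases max_choice ‖A‖ ‖B‖ with h' | h'
        · exact absurd (by rw [← h', ← h, hmax]) hA1
        · rw [← h', ← h, hmax]
      · exact absurd (by rw [← h, hmax]) hC1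
    have hAlt : ‖A‖ < 1 := lt_of_le_of_ne hA hA1
    have hClt : ‖C‖ < 1 := lt_of_le_of_ne hC hC1
    have h2 : ‖(2 : ℚ_[p])‖ = 1 := by
      have hle : ‖((2 : ℤ) : ℚ_[p])‖ ≤ 1 := Padic.norm_int_le_one 2
      have hnlt : ¬ ‖((2 : ℤ) : ℚ_[p])‖ < 1 := by
        rw [Padic.norm_intCast_lt_one_iff]
        intro hdvd
        have hple : p ≤ 2 := Nat.le_of_dvd (by norm_num) (by exact_mod_cast hdvd)
        have hp2 : 2 ≤ p := (Fact.out : p.Prime).two_le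
        have : p = 2 := le_antisymm hple hp2
        rw [this] at hp
        exact (by decide : ¬ Odd 2) hp
      push_cast at hle hnlt
      linarith [lt_or_ge (‖(2:ℚ_[p])‖) 1]
    have hAC : ‖A + C‖ < 1 :=
      lt_of_le_of_lt (Padic.nonarchimedean A C) (max_lt hAlt hClt)
    have h2B : ‖2 * B‖ = 1 := by rw [norm_mul, h2, hB1, one_mul]
    have hA' : ‖A + 2 * B + C‖ = 1 := by
      have he : A + 2 * B + C = 2 * B + (A + C) := by ring
      rw [he, Padic.add_eq_max_of_ne (by rw [h2B]; exact ne_of_gt hAC), h2B,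
        max_eq_left (le_of_lt (lt_of_lt_of_le hAC (by norm_num)))]
    have hBC : ‖B + C‖ ≤ 1 :=
      le_trans (Padic.nonarchimedean B C) (max_le hB hC)
    have hdisc' : (B + C) ^ 2 - (A + 2 * B + C) * C =
        (d : ℚ_[p]) * ((p : ℚ_[p]) ^ l₂ * ε) ^ 2 := by
      linear_combination hdisc
    obtain ⟨v, k, hk⟩ := core d (A + 2 * B + C) (B + C) C ε l₂ hA' hBC hε hdisc'
    have hTu : IsUnit (!![(1:ℤ_[p]), 0; -1, 1]) := by
      rw [Matrix.isUnit_iff_isUnit_det, Matrix.det_fin_two_of]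
      simpa using (isUnit_one (M := ℤ_[p]))
    refine ⟨v, k * hTu.unit, transport _ _ _ _ hTu.unit k ?_ hk⟩
    rw [hTu.unit_spec]
    ext i j
    fin_cases i <;> fin_cases j <;>
      simp [coeM, Matrix.mul_apply, Fin.sum_univ_two] <;> push_cast <;> ring


lemma unique_aux (d : ℤ_[p]) (y₁ y₁₂ y₂ : ℚ_[p]) (l₁ : ℤ) (l₂ : ℕ)
    (u : ℤ_[p]ˣ) (k : GL (Fin 2) ℤ_[p])
    (h : !![y₁, y₁₂ / 2; y₁₂ / 2, y₂] =
        ((p : ℚ_[p]) ^ l₁ * ((u : ℤ_[p]) : ℚ_[p]) /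
            (((k : Matrix (Fin 2) (Fin 2) ℤ_[p]).det : ℤ_[p]) : ℚ_[p])) •
          ((coeM (k : Matrix (Fin 2) (Fin 2) ℤ_[p]))ᵀ *
            Matrix.diagonal ![1, -(d : ℚ_[p]) * (p : ℚ_[p]) ^ (2 * l₂)] *
            coeM (k : Matrix (Fin 2) (Fin 2) ℤ_[p]))) :
    max (max ‖y₁‖ ‖y₁₂ / 2‖) ‖y₂‖ = (p : ℝ) ^ (-l₁) ∧
    ‖y₁ * y₂ - y₁₂ / 2 * (y₁₂ / 2)‖ =
      ((p : ℝ) ^ (-l₁)) ^ 2 * ‖(d : ℚ_[p])‖ * (p : ℝ) ^ (-(2 * (l₂ : ℤ))) := by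
  set ρ : ℝ := (p : ℝ) with hρ
  have hρ1 : 1 < ρ := by rw [hρ]; exact_mod_cast (Fact.out : p.Prime).one_lt
  have hρ0 : (0:ℝ) < ρ := lt_trans one_pos hρ1
  set km : Matrix (Fin 2) (Fin 2) ℤ_[p] := (k : Matrix (Fin 2) (Fin 2) ℤ_[p]) with hkm
  set Dz : Matrix (Fin 2) (Fin 2) ℤ_[p] :=
    Matrix.diagonal ![1, -d * (p : ℤ_[p]) ^ (2 * l₂)] with hDz
  set K : Matrix (Fin 2) (Fin 2) ℤ_[p] := kmᵀ * Dz * km with hK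
  set s : ℚ_[p] := (p : ℚ_[p]) ^ l₁ * ((u : ℤ_[p]) : ℚ_[p]) /
      (((km.det : ℤ_[p])) : ℚ_[p]) with hs
  -- the diagonal matrix over ℚ_p is the coercion of the one over ℤ_p
  have hDcoe : Matrix.diagonal ![1, -(d : ℚ_[p]) * (p : ℚ_[p]) ^ (2 * l₂)] = coeM Dz := by
    ext i j
    fin_cases i <;> fin_cases j <;>
      simp [hDz, coeM, Matrix.diagonal] <;> push_cast <;> ring
  have h' : !![y₁, y₁₂ / 2; y₁₂ / 2, y₂] = s • coeM K := by
    rw [h, hDcoe, hK, coeM_mul, coeM_mul, coeM_transpose]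
  -- norm of the scalar
  have hdetu : IsUnit km.det := (Matrix.isUnit_iff_isUnit_det _).mp k.isUnit
  have hdet1 : ‖((km.det : ℤ_[p]) : ℚ_[p])‖ = 1 := by
    rw [← PadicInt.norm_def]; exact PadicInt.isUnit_iff.mp hdetu
  have hu1 : ‖((u : ℤ_[p]) : ℚ_[p])‖ = 1 := by
    rw [← PadicInt.norm_def]; exact PadicInt.norm_units u
  have hsnorm : ‖s‖ = ρ ^ (-l₁) := by
    rw [hs, norm_div, norm_mul, norm_zpow, Padic.norm_p, hu1, hdet1, mul_one, div_one,
      _root_.inv_zpow, ← _root_.zpow_neg, hρ]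
  -- K is symmetric
  have hKsymm : K 1 0 = K 0 1 := by
    have : Kᵀ = K := by
      rw [hK, Matrix.transpose_mul, Matrix.transpose_mul, Matrix.transpose_transpose,
        hDz, Matrix.diagonal_transpose, Matrix.mul_assoc]
    conv_lhs => rw [← this]
    rfl
  -- entries
  have hent : ∀ i j, (!![y₁, y₁₂ / 2; y₁₂ / 2, y₂] : Matrix (Fin 2) (Fin 2) ℚ_[p]) i j
      = s * ((K i j : ℤ_[p]) : ℚ_[p]) := by
    intro i j
    rw [h']
    simp [Matrix.smul_apply, coeM_apply, smul_eq_mul]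
  have hy1 : y₁ = s * ((K 0 0 : ℤ_[p]) : ℚ_[p]) := by simpa using hent 0 0
  have hy12 : y₁₂ / 2 = s * ((K 0 1 : ℤ_[p]) : ℚ_[p]) := by simpa using hent 0 1
  have hy2 : y₂ = s * ((K 1 1 : ℤ_[p]) : ℚ_[p]) := by simpa using hent 1 1
  -- the maximum of the norms of the entries of K is 1
  have hKmax : max (max ‖K 0 0‖ ‖K 0 1‖) ‖K 1 1‖ = 1 := by
    have hle : max (max ‖K 0 0‖ ‖K 0 1‖) ‖K 1 1‖ ≤ 1 :=
      max_le (max_le (PadicInt.norm_le_one _) (PadicInt.norm_le_one _)) (PadicInt.norm_le_one _)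
    rcases lt_or_eq_of_le hle with hlt | heq
    · exfalso
      have hs00 : ‖K 0 0‖ < 1 :=
        lt_of_le_of_lt (le_max_left _ _) (lt_of_le_of_lt (le_max_left _ _) hlt)
      have hs01 : ‖K 0 1‖ < 1 :=
        lt_of_le_of_lt (le_max_right _ _) (lt_of_le_of_lt (le_max_left _ _) hlt)
      have hs11 : ‖K 1 1‖ < 1 := lt_of_le_of_lt (le_max_right _ _) hlt
      have hs10 : ‖K 1 0‖ < 1 := by rw [hKsymm]; exact hs01
      have hd00 : (p : ℤ_[p]) ∣ K 0 0 := (PadicInt.norm_lt_one_iff_dvd _).mp hs00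
      have hd01 : (p : ℤ_[p]) ∣ K 0 1 := (PadicInt.norm_lt_one_iff_dvd _).mp hs01
      have hd10 : (p : ℤ_[p]) ∣ K 1 0 := (PadicInt.norm_lt_one_iff_dvd _).mp hs10
      have hd11 : (p : ℤ_[p]) ∣ K 1 1 := (PadicInt.norm_lt_one_iff_dvd _).mp hs11
      -- K conjugated back gives Dz, whose (0,0) entry is 1
      set g : Matrix (Fin 2) (Fin 2) ℤ_[p] := ((k⁻¹ : GL (Fin 2) ℤ_[p]) : Matrix (Fin 2) (Fin 2) ℤ_[p]) with hg
      have hkg : km * g = 1 := by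
        rw [hkm, hg, ← Units.val_mul, mul_inv_cancel]; rfl
      have h1 : gᵀ * kmᵀ = 1 := by
        rw [← Matrix.transpose_mul, hkg, Matrix.transpose_one]
      have hDzK : Dz = gᵀ * K * g := by
        calc Dz = (gᵀ * kmᵀ) * Dz * (km * g) := by
              rw [h1, hkg, Matrix.one_mul, Matrix.mul_one]
        _ = gᵀ * K * g := by rw [hK]; simp only [Matrix.mul_assoc]
      have hone : (1 : ℤ_[p]) = (gᵀ * K * g) 0 0 := by
        conv_lhs => rw [show (1:ℤ_[p]) = Dz 0 0 by simp [hDz], hDzK]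
      have hdvd1 : (p : ℤ_[p]) ∣ 1 := by
        rw [hone]
        simp only [Matrix.mul_apply, Fin.sum_univ_two, Matrix.transpose_apply]
        exact dvd_add
          (dvd_mul_of_dvd_left (dvd_add (hd00.mul_left _) (hd10.mul_left _)) _)
          (dvd_mul_of_dvd_left (dvd_add (hd01.mul_left _) (hd11.mul_left _)) _)
      have hup : IsUnit ((p : ℤ_[p])) := isUnit_of_dvd_one hdvd1
      rw [PadicInt.isUnit_iff, PadicInt.norm_p, inv_eq_one] at hup
      rw [hρ] at hρ1
      linarith
    · exact heq
  constructor
  · rw [hy1, hy12, hy2, norm_mul, norm_mul, norm_mul, ← PadicInt.norm_def,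
      ← PadicInt.norm_def, ← PadicInt.norm_def,
      ← mul_max_of_nonneg _ _ (norm_nonneg s), ← mul_max_of_nonneg _ _ (norm_nonneg s),
      hKmax, mul_one, hsnorm]
  · have hdetK : y₁ * y₂ - y₁₂ / 2 * (y₁₂ / 2) = s ^ 2 * ((K.det : ℤ_[p]) : ℚ_[p]) := by
      have := congrArg Matrix.det h'
      rw [Matrix.det_fin_two_of, Matrix.det_smul, coeM_det] at this
      simpa [Fintype.card_fin] using this
    have hdetKval : K.det = km.det * km.det * (-d * (p : ℤ_[p]) ^ (2 * l₂)) := by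
      rw [hK, Matrix.det_mul, Matrix.det_mul, Matrix.det_transpose, hDz,
        Matrix.det_diagonal, Fin.prod_univ_two]
      simp [mul_comm, mul_assoc, mul_left_comm]
    have hdnorm : ‖((K.det : ℤ_[p]) : ℚ_[p])‖ = ‖(d : ℚ_[p])‖ * ρ ^ (-(2 * (l₂:ℤ))) := by
      rw [← PadicInt.norm_def, hdetKval, norm_mul, norm_mul,
        PadicInt.isUnit_iff.mp hdetu, norm_mul, norm_neg, norm_pow,
        PadicInt.norm_p, one_mul, one_mul, PadicInt.norm_def]
      congr 1
      rw [← zpow_natCast ((p:ℝ)⁻¹) (2 * l₂), _root_.inv_zpow, ← _root_.zpow_neg, hρ]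
      norm_num
    rw [hdetK, norm_mul, norm_pow, hsnorm, hdnorm, mul_assoc]

end Stmt16Aux

open Stmt16Aux in
/-- every `(y₁,y₁₂,y₂) ∈ ℚ_p³` whose discriminant lies in `d·(ℚ_pˣ)²` admits
unique integers `l₁ ∈ ℤ`, `l₂ ∈ ℕ` such that the associated symmetric matrix
`[[y₁, y₁₂/2],[y₁₂/2, y₂]]` equals `p^{l₁}·(u/det k)·kᵀ·diag(1, −d·p^{2l₂})·k` for some
`u ∈ ℤ_pˣ`, `k ∈ GL₂(ℤ_p)`. -/
theorem stmt16 (p : ℕ) [Fact p.Prime] (hp : Odd p) (d : ℤ_[p])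
    (hd : ‖(d : ℚ_[p])‖ = 1 ∨ ‖(d : ℚ_[p])‖ = (p : ℝ)⁻¹)
    (y₁ y₁₂ y₂ : ℚ_[p])
    (hy : ∃ c : ℚ_[p], c ≠ 0 ∧ y₁₂ ^ 2 - 4 * y₁ * y₂ = (d : ℚ_[p]) * c ^ 2) :
    ∃! l : ℤ × ℕ, ∃ (u : ℤ_[p]ˣ) (k : GL (Fin 2) ℤ_[p]),
      !![y₁, y₁₂ / 2; y₁₂ / 2, y₂] =
        ((p : ℚ_[p]) ^ l.1 * ((u : ℤ_[p]) : ℚ_[p]) /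
            (((k : Matrix (Fin 2) (Fin 2) ℤ_[p]).det : ℤ_[p]) : ℚ_[p])) •
          ((coeM (k : Matrix (Fin 2) (Fin 2) ℤ_[p]))ᵀ *
            Matrix.diagonal ![1, -(d : ℚ_[p]) * (p : ℚ_[p]) ^ (2 * l.2)] *
            coeM (k : Matrix (Fin 2) (Fin 2) ℤ_[p])) := by
  obtain ⟨c, hc0, hc⟩ := hy
  set ρ : ℝ := (p : ℝ) with hρ
  have hρ1 : 1 < ρ := by rw [hρ]; exact_mod_cast (Fact.out : p.Prime).one_lt
  have hρ0 : (0:ℝ) < ρ := lt_trans one_pos hρ1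
  have hd0 : (d : ℚ_[p]) ≠ 0 := by
    intro h0
    rcases hd with h | h <;> rw [h0, norm_zero] at h
    · norm_num at h
    · have : (0:ℝ) < (p:ℝ)⁻¹ := by positivity
      rw [← h] at this; norm_num at this
  set m : ℝ := max (max ‖y₁‖ ‖y₁₂ / 2‖) ‖y₂‖ with hm
  have hm0 : 0 < m := by
    rcases lt_or_ge 0 m with h | h
    · exact h
    · exfalso
      have h1 : ‖y₁‖ = 0 := le_antisymm (le_trans (le_trans (le_max_left _ _) (le_max_left _ _)) h) (norm_nonneg _)
      have h2 : ‖y₁₂ / 2‖ = 0 := le_antisymm (le_trans (le_trans (le_max_right _ _) (le_max_left _ _)) h) (norm_nonneg _)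
      have h3 : ‖y₂‖ = 0 := le_antisymm (le_trans (le_max_right _ _) h) (norm_nonneg _)
      rw [norm_eq_zero] at h1 h2 h3
      have h2' : y₁₂ = 0 := by
        field_simp at h2
        simpa using h2
      rw [h1, h2', h3] at hc
      simp only [zero_pow, mul_zero, sub_zero, ne_eq, OfNat.ofNat_ne_zero,
        not_false_eq_true, zero_mul, sub_self] at hc
      exact (mul_ne_zero hd0 (pow_ne_zero 2 hc0)) hc.symm
  have hml : ∃ n : ℤ, m = ρ ^ (-n) := by
    have hval : ∀ z : ℚ_[p], ‖z‖ = m → ∃ n : ℤ, m = ρ ^ (-n) := by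
      intro z hz
      have hz0 : z ≠ 0 := by
        intro h; rw [h, norm_zero] at hz; exact (ne_of_gt hm0) hz.symm
      exact ⟨z.valuation, by rw [← hz, Padic.norm_eq_zpow_neg_valuation hz0, hρ]⟩
    rcases max_choice (max ‖y₁‖ ‖y₁₂ / 2‖) ‖y₂‖ with h | h
    · rcases max_choice ‖y₁‖ ‖y₁₂ / 2‖ with h' | h'
      · exact hval y₁ (by rw [hm, h, h'])
      · exact hval (y₁₂ / 2) (by rw [hm, h, h'])
    · exact hval y₂ (by rw [hm, h])
  obtain ⟨l₁, hl₁⟩ := hml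
  have hpq0 : (p : ℚ_[p]) ≠ 0 := by
    exact_mod_cast Nat.cast_ne_zero.mpr (Fact.out : p.Prime).ne_zero
  set w : ℚ_[p] := (p : ℚ_[p]) ^ (-l₁) with hw
  have hw0 : w ≠ 0 := zpow_ne_zero _ hpq0
  have hwn : ‖w‖ = ρ ^ l₁ := by
    rw [hw, norm_zpow, Padic.norm_p, _root_.inv_zpow, ← _root_.zpow_neg, neg_neg, hρ]
  have hmul : ρ ^ l₁ * ρ ^ (-l₁) = 1 := by
    rw [← zpow_add₀ (ne_of_gt hρ0)]; simp
  have hρl0 : (0:ℝ) < ρ ^ l₁ := zpow_pos hρ0 _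
  set A : ℚ_[p] := w * y₁ with hAdef
  set B : ℚ_[p] := w * (y₁₂ / 2) with hBdef
  set C : ℚ_[p] := w * y₂ with hCdef
  have hAn : ‖A‖ = ρ ^ l₁ * ‖y₁‖ := by rw [hAdef, norm_mul, hwn]
  have hBn : ‖B‖ = ρ ^ l₁ * ‖y₁₂ / 2‖ := by rw [hBdef, norm_mul, hwn]
  have hCn : ‖C‖ = ρ ^ l₁ * ‖y₂‖ := by rw [hCdef, norm_mul, hwn]
  have hmax : max (max ‖A‖ ‖B‖) ‖C‖ = 1 := by
    rw [hAn, hBn, hCn, ← mul_max_of_nonneg _ _ (le_of_lt hρl0),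
      ← mul_max_of_nonneg _ _ (le_of_lt hρl0), ← hm, hl₁, hmul]
  have hA : ‖A‖ ≤ 1 := le_trans (le_trans (le_max_left _ _) (le_max_left _ _)) (le_of_eq hmax)
  have hB : ‖B‖ ≤ 1 := le_trans (le_trans (le_max_right _ _) (le_max_left _ _)) (le_of_eq hmax)
  have hC : ‖C‖ ≤ 1 := le_trans (le_max_right _ _) (le_of_eq hmax)
  set c₀ : ℚ_[p] := w * c / 2 with hc₀def
  have h20 : (2 : ℚ_[p]) ≠ 0 := two_ne_zero
  have hc₀0 : c₀ ≠ 0 := by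
    rw [hc₀def]
    exact div_ne_zero (mul_ne_zero hw0 hc0) h20
  have hdisc : B ^ 2 - A * C = (d : ℚ_[p]) * c₀ ^ 2 := by
    rw [hAdef, hBdef, hCdef, hc₀def]
    field_simp
    linear_combination hc
  have hdc : ‖(d : ℚ_[p])‖ * ‖c₀‖ ^ 2 ≤ 1 := by
    have he : B ^ 2 - A * C = B ^ 2 + (-(A * C)) := by ring
    calc ‖(d : ℚ_[p])‖ * ‖c₀‖ ^ 2 = ‖(d : ℚ_[p]) * c₀ ^ 2‖ := by rw [norm_mul, norm_pow]
    _ = ‖B ^ 2 + (-(A * C))‖ := by rw [← hdisc, ← he]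
    _ ≤ max ‖B ^ 2‖ ‖-(A * C)‖ := Padic.nonarchimedean _ _
    _ ≤ 1 := by
        apply max_le
        · rw [norm_pow]; exact pow_le_one₀ (norm_nonneg _) hB
        · rw [norm_neg, norm_mul]
          exact mul_le_one₀ hA (norm_nonneg _) hC
  obtain ⟨n₀, hn₀⟩ : ∃ n : ℤ, ‖c₀‖ = ρ ^ (-n) :=
    ⟨c₀.valuation, by rw [Padic.norm_eq_zpow_neg_valuation hc₀0, hρ]⟩
  have hd' : ρ⁻¹ ≤ ‖(d : ℚ_[p])‖ := by
    have hinv : ρ⁻¹ < 1 := by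
      rw [inv_lt_one_iff₀]; right; exact hρ1
    rcases hd with h | h
    · rw [h]; linarith
    · rw [h, hρ]
  have hc₀le : ‖c₀‖ ≤ 1 := by
    by_contra hgt
    push_neg at hgt
    have h1 : (1:ℤ) ≤ -n₀ := by
      by_contra hn
      push_neg at hn
      have : -n₀ ≤ 0 := by omega
      have := zpow_le_zpow_right₀ (le_of_lt hρ1) this
      rw [zpow_zero] at this
      rw [hn₀] at hgt
      linarith
    have h2 : ρ ≤ ‖c₀‖ := by
      have := zpow_le_zpow_right₀ (le_of_lt hρ1) h1
      rw [zpow_one] at this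
      rw [hn₀]
      exact this
    have h3 : ρ ^ 2 ≤ ‖c₀‖ ^ 2 := by nlinarith
    have h4 : ρ⁻¹ * ρ ^ 2 ≤ ‖(d : ℚ_[p])‖ * ‖c₀‖ ^ 2 :=
      mul_le_mul hd' h3 (by positivity) (norm_nonneg _)
    have h5 : ρ⁻¹ * ρ ^ 2 = ρ := by
      rw [sq, ← mul_assoc, inv_mul_cancel₀ (ne_of_gt hρ0), one_mul]
    rw [h5] at h4
    linarith
  have hn₀0 : 0 ≤ n₀ := by
    by_contra hneg
    push_neg at hneg
    have h1 : (1:ℤ) ≤ -n₀ := by omega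
    have := zpow_le_zpow_right₀ (le_of_lt hρ1) h1
    rw [zpow_one] at this
    rw [hn₀] at hc₀le
    linarith
  set l₂ : ℕ := n₀.toNat with hl₂def
  have hl₂cast : (l₂ : ℤ) = n₀ := Int.toNat_of_nonneg hn₀0
  set ε : ℚ_[p] := c₀ / (p : ℚ_[p]) ^ l₂ with hεdef
  have hpl0 : ((p : ℚ_[p]) ^ l₂) ≠ 0 := pow_ne_zero _ hpq0
  have hεc : c₀ = (p : ℚ_[p]) ^ l₂ * ε := by
    rw [hεdef]; field_simp
  have hpow : ((p:ℝ)⁻¹) ^ l₂ = ρ ^ (-n₀) := by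
    rw [← hl₂cast, ← zpow_natCast ((p:ℝ)⁻¹) l₂, _root_.inv_zpow, ← _root_.zpow_neg, hρ]
  have hεn : ‖ε‖ = 1 := by
    rw [hεdef, norm_div, norm_pow, Padic.norm_p, hpow, ← hn₀]
    exact div_self (by rw [hn₀]; exact ne_of_gt (zpow_pos hρ0 _))
  have hdisc2 : B ^ 2 - A * C = (d : ℚ_[p]) * ((p : ℚ_[p]) ^ l₂ * ε) ^ 2 := by
    rw [← hεc]; exact hdisc
  obtain ⟨v, k, hk⟩ := exist2 hp d A B C ε l₂ hA hB hC hεn hmax hdisc2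
  have hdetu : IsUnit ((k : Matrix (Fin 2) (Fin 2) ℤ_[p]).det) :=
    (Matrix.isUnit_iff_isUnit_det _).mp k.isUnit
  have hdet1 : ‖(((k : Matrix (Fin 2) (Fin 2) ℤ_[p]).det : ℤ_[p]) : ℚ_[p])‖ = 1 := by
    rw [← PadicInt.norm_def]; exact PadicInt.isUnit_iff.mp hdetu
  have hdet0 : (((k : Matrix (Fin 2) (Fin 2) ℤ_[p]).det : ℤ_[p]) : ℚ_[p]) ≠ 0 := by
    intro h0; rw [h0, norm_zero] at hdet1; norm_num at hdet1
  have hPmine : ∃ (u : ℤ_[p]ˣ) (k : GL (Fin 2) ℤ_[p]),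
      !![y₁, y₁₂ / 2; y₁₂ / 2, y₂] =
        ((p : ℚ_[p]) ^ l₁ * ((u : ℤ_[p]) : ℚ_[p]) /
            (((k : Matrix (Fin 2) (Fin 2) ℤ_[p]).det : ℤ_[p]) : ℚ_[p])) •
          ((coeM (k : Matrix (Fin 2) (Fin 2) ℤ_[p]))ᵀ *
            Matrix.diagonal ![1, -(d : ℚ_[p]) * (p : ℚ_[p]) ^ (2 * l₂)] *
            coeM (k : Matrix (Fin 2) (Fin 2) ℤ_[p])) := by
    refine ⟨v * hdetu.unit, k, ?_⟩
    have hscal : (p : ℚ_[p]) ^ l₁ * (((v * hdetu.unit : ℤ_[p]ˣ) : ℤ_[p]) : ℚ_[p]) /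
        (((k : Matrix (Fin 2) (Fin 2) ℤ_[p]).det : ℤ_[p]) : ℚ_[p]) =
        (p : ℚ_[p]) ^ l₁ * ((v : ℤ_[p]) : ℚ_[p]) := by
      rw [Units.val_mul, PadicInt.coe_mul, hdetu.unit_spec]
      field_simp
    rw [hscal]
    have hwc : (p : ℚ_[p]) ^ l₁ * w = 1 := by
      rw [hw, ← zpow_add₀ hpq0]; simp
    have hM : !![y₁, y₁₂ / 2; y₁₂ / 2, y₂] = ((p : ℚ_[p]) ^ l₁) • !![A, B; B, C] := by
      ext i j
      fin_cases i <;> fin_cases j <;>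
        simp [hAdef, hBdef, hCdef, ← mul_assoc, hwc]
    rw [hM, hk, smul_smul]
  refine ⟨(l₁, l₂), hPmine, ?_⟩
  rintro ⟨l₁', l₂'⟩ ⟨u', k', hk'⟩
  obtain ⟨v₀, k₀, hk₀⟩ := hPmine
  have H1 := unique_aux d y₁ y₁₂ y₂ l₁' l₂' u' k' hk'
  have H2 := unique_aux d y₁ y₁₂ y₂ l₁ l₂ v₀ k₀ hk₀
  have hdpos : 0 < ‖(d : ℚ_[p])‖ := norm_pos_iff.mpr hd0
  have e1 : l₁' = l₁ := by
    have he : ρ ^ (-l₁') = ρ ^ (-l₁) := by rw [hρ, ← H1.1, ← H2.1]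
    have := zpow_right_injective₀ hρ0 (ne_of_gt hρ1) he
    omega
  have e2 : l₂' = l₂ := by
    have he := H1.2.symm.trans H2.2
    rw [e1] at he
    have hpos : (0:ℝ) < ((p:ℝ) ^ (-l₁)) ^ 2 * ‖(d : ℚ_[p])‖ := by positivity
    have he2 : (p:ℝ) ^ (-(2 * (l₂' : ℤ))) = (p:ℝ) ^ (-(2 * (l₂ : ℤ))) := by
      have ha : ((p:ℝ) ^ (-l₁)) ^ 2 * ‖(d : ℚ_[p])‖ * (p:ℝ) ^ (-(2 * (l₂' : ℤ))) =
          ((p:ℝ) ^ (-l₁)) ^ 2 * ‖(d : ℚ_[p])‖ * (p:ℝ) ^ (-(2 * (l₂ : ℤ))) := he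
      exact mul_left_cancel₀ (ne_of_gt hpos) ha
    have := zpow_right_injective₀ (by rw [← hρ]; exact hρ0) (by rw [← hρ]; exact ne_of_gt hρ1) he2
    omega
  simp only [Prod.mk.injEq]
  exact ⟨e1, e2⟩
end
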